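/- arXiv:0809.3225 — 5 statements merged into one kernel-verified Lean document; each statement's English description precedes it below -/
import Mathlib

section
/- Let n ≥ 1 and let G ≤ S_n be an orbit homogeneous permutation group. Then for every stable multiaffine polynomial f ∈ ℂ[z_1,…,z_n], the polynomial T_G(f) = (1/|G|) ∑_{σ∈G} σ(f) is stable. -/
open MvPolynomial
open scoped Classical

/-- A polynomial is stable if it is nonvanishing whenever all arguments lie in the
open upper half-plane `H = {z : ℂ | 0 < z.im}`. -/
def IsStable {σ : Type*} (f : MvPolynomial σ ℂ) : Prop :=
  ∀ x : σ → ℂ, (∀ i, 0 < (x i).im) → eval x f ≠ 0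

/-- A polynomial is multiaffine if it has degree at most 1 in each variable. -/
def IsMultiaffine {σ : Type*} (f : MvPolynomial σ ℂ) : Prop :=
  ∀ i, degreeOf i f ≤ 1

/-- The `G`-symmetrizer `T_G = (1/|G|) ∑_{σ ∈ G} σ` applied to `f`. -/
noncomputable def symmG {n : ℕ} (G : Subgroup (Equiv.Perm (Fin n)))
    (f : MvPolynomial (Fin n) ℂ) : MvPolynomial (Fin n) ℂ :=
  (Nat.card G : ℂ)⁻¹ • ∑ σ : G, rename (⇑(σ : Equiv.Perm (Fin n))) f

/-- `G` is orbit homogeneous: whenever two subsets `A, B` of `{1,…,n}` satisfy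
`|A ∩ S| = |B ∩ S|` for every orbit `S` of `G`, some `σ ∈ G` maps `A` onto `B`. -/
def OrbitHomogeneous {n : ℕ} (G : Subgroup (Equiv.Perm (Fin n))) : Prop :=
  ∀ A B : Finset (Fin n),
    (∀ i : Fin n, ((A : Set (Fin n)) ∩ MulAction.orbit G i).ncard
      = ((B : Set (Fin n)) ∩ MulAction.orbit G i).ncard) →
    ∃ σ ∈ G, A.image ⇑σ = B

section AuxStability

variable {n : ℕ}

lemma disk_mem {w : ℂ} {b : ℝ} (hb : 0 < b) (hw : b ≤ w.im) :
    ‖(w⁻¹ + ((1/(2*b) : ℝ) : ℂ) * Complex.I)‖ ≤ 1 / (2*b) := by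
  have hw0 : w ≠ 0 := by
    intro h; rw [h] at hw; simp at hw; linarith
  have hN : 0 < Complex.normSq w := Complex.normSq_pos.mpr hw0
  set N := Complex.normSq w with hNdef
  have hNval : N = w.re^2 + w.im^2 := by rw [hNdef, Complex.normSq_apply]; ring
  have hexp : Complex.normSq (w⁻¹ + ((1/(2*b) : ℝ) : ℂ) * Complex.I)
      = (w.re/N)^2 + (1/(2*b) - w.im/N)^2 := by
    simp [Complex.normSq_apply, Complex.add_re, Complex.add_im, Complex.inv_re, Complex.inv_im,
      Complex.mul_re, Complex.mul_im, ← hNdef]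
    ring
  have hb2 : (2*b) ≠ 0 := by positivity
  have hNne : N ≠ 0 := ne_of_gt hN
  have h1 : ((w.re/N)^2 + (1/(2*b) - w.im/N)^2) * (N^2 * (2*b)^2)
      = w.re^2*(2*b)^2 + (N - 2*b*w.im)^2 := by field_simp
  have h2 : (1/(2*b))^2 * (N^2 * (2*b)^2) = N^2 := by field_simp
  have h3 : w.re^2*(2*b)^2 + (N - 2*b*w.im)^2 ≤ N^2 := by
    nlinarith [mul_nonneg (mul_nonneg (by linarith : (0:ℝ) ≤ 4*b) hN.le)
      (by linarith : (0:ℝ) ≤ w.im - b)]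
  have hsq : Complex.normSq (w⁻¹ + ((1/(2*b) : ℝ) : ℂ) * Complex.I) ≤ (1/(2*b))^2 := by
    rw [hexp]
    have hpos : (0:ℝ) < N^2 * (2*b)^2 := by positivity
    rw [← mul_le_mul_iff_of_pos_right hpos, h1, h2]
    exact h3
  calc ‖_‖ = Real.sqrt (Complex.normSq (w⁻¹ + ((1/(2*b) : ℝ) : ℂ) * Complex.I)) :=
        Complex.norm_def _
    _ ≤ Real.sqrt ((1/(2*b))^2) := Real.sqrt_le_sqrt hsq
    _ = 1/(2*b) := Real.sqrt_sq (by positivity)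

lemma sum_disk {u : ℂ} (hu : 0 < u.im) (R : Multiset ℂ) (hR : ∀ α ∈ R, α.im ≤ 0) :
    ‖((R.map (fun α => (u - α)⁻¹)).sum
      + (R.card : ℂ) * (((1/(2*u.im) : ℝ)) : ℂ) * Complex.I)‖ ≤ (R.card : ℝ)/(2*u.im) := by
  induction R using Multiset.induction_on with
  | empty => simp
  | cons a R ih =>
    have ha : a.im ≤ 0 := hR a (Multiset.mem_cons_self a R)
    have hR' : ∀ α ∈ R, α.im ≤ 0 := fun α hα => hR α (Multiset.mem_cons_of_mem hα)
    have h1 : ‖((u - a)⁻¹ + ((1/(2*u.im) : ℝ) : ℂ) * Complex.I)‖ ≤ 1 / (2*u.im) :=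
      disk_mem hu (by simp [Complex.sub_im]; linarith)
    have h2 := ih hR'
    simp only [Multiset.map_cons, Multiset.sum_cons, Multiset.card_cons]
    have heq : (u - a)⁻¹ + (R.map (fun α => (u - α)⁻¹)).sum
        + ((R.card + 1 : ℕ) : ℂ) * ((1/(2*u.im) : ℝ) : ℂ) * Complex.I
        = ((u - a)⁻¹ + ((1/(2*u.im) : ℝ) : ℂ) * Complex.I)
          + ((R.map (fun α => (u - α)⁻¹)).sum
            + (R.card : ℂ) * ((1/(2*u.im) : ℝ) : ℂ) * Complex.I) := by
      push_cast; ring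
    rw [heq]
    calc ‖_‖ ≤ _ := norm_add_le _ _
      _ ≤ 1 / (2*u.im) + (R.card : ℝ)/(2*u.im) := add_le_add h1 h2
      _ = ((R.card + 1 : ℕ) : ℝ)/(2*u.im) := by push_cast; ring

lemma logderiv (R : Multiset ℂ) (c u : ℂ) (h : ∀ α ∈ R, u ≠ α) :
    (Polynomial.derivative (Polynomial.C c * (R.map fun a => Polynomial.X - Polynomial.C a).prod)).eval u
      = (Polynomial.C c * (R.map fun a => Polynomial.X - Polynomial.C a).prod).eval u
        * (R.map fun α => (u - α)⁻¹).sum := by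
  induction R using Multiset.induction_on with
  | empty => simp
  | cons a R ih =>
    have ha : u - a ≠ 0 := sub_ne_zero.mpr (h a (Multiset.mem_cons_self a R))
    have ih' := ih (fun α hα => h α (Multiset.mem_cons_of_mem hα))
    simp only [Multiset.map_cons, Multiset.prod_cons, Multiset.sum_cons]
    have hre : Polynomial.C c * ((Polynomial.X - Polynomial.C a) * (R.map fun a => Polynomial.X - Polynomial.C a).prod)
        = (Polynomial.X - Polynomial.C a) * (Polynomial.C c * (R.map fun a => Polynomial.X - Polynomial.C a).prod) := by ring
    rw [hre]
    rw [Polynomial.derivative_mul]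
    simp only [Polynomial.derivative_sub, Polynomial.derivative_X, Polynomial.derivative_C, sub_zero, one_mul]
    rw [Polynomial.eval_add, Polynomial.eval_mul, Polynomial.eval_mul, Polynomial.eval_sub,
      Polynomial.eval_X, Polynomial.eval_C, ih']
    simp only [Polynomial.eval_mul, Polynomial.eval_sub, Polynomial.eval_X, Polynomial.eval_C]
    linear_combination (-(c * (R.map fun a => Polynomial.X - Polynomial.C a).prod.eval u)) * mul_inv_cancel₀ ha

lemma UL {q : Polynomial ℂ} {m : ℕ} (hdeg : q.natDegree ≤ m) (hm : 1 ≤ m)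
    (hq : ∀ t : ℂ, 0 < t.im → Polynomial.eval t q ≠ 0) {u v : ℂ}
    (hu : 0 < u.im) (hv : 0 < v.im) :
    (m : ℂ) * Polynomial.eval u q + (v - u) * Polynomial.eval u (Polynomial.derivative q) ≠ 0 := by
  intro hcontra
  have hq0 : q ≠ 0 := fun h => hq Complex.I (by simp) (by simp [h])
  have hcard : q.roots.card = q.natDegree :=
    (Polynomial.splits_iff_card_roots).mp (IsAlgClosed.splits q)
  have hfac := Polynomial.C_leadingCoeff_mul_prod_multiset_X_sub_C hcard
  have hroots : ∀ α ∈ q.roots, α.im ≤ 0 := by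
    intro α hα
    by_contra h
    exact hq α (lt_of_not_ge h) ((Polynomial.mem_roots').mp hα).2
  have hne : ∀ α ∈ q.roots, u ≠ α := by
    intro α hα h
    have := hroots α hα; rw [← h] at this; linarith
  have hlog := logderiv q.roots q.leadingCoeff u hne
  rw [hfac] at hlog
  set ζ := (q.roots.map fun α => (u - α)⁻¹).sum with hζdef
  have hqu : Polynomial.eval u q ≠ 0 := hq u hu
  have hmain : (m:ℂ) + (v - u) * ζ = 0 := by
    have h0 : Polynomial.eval u q * ((m:ℂ) + (v-u)*ζ) = 0 := by
      rw [hlog] at hcontra; linear_combination hcontra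
    rcases mul_eq_zero.mp h0 with h | h
    · exact absurd h hqu
    · exact h
  have hζ0 : ζ ≠ 0 := by
    intro h
    rw [h, mul_zero, add_zero, Nat.cast_eq_zero] at hmain
    omega
  -- disk bound, padded to m
  set b := u.im with hbdef
  have hb : 0 < b := hu
  have hdm : q.roots.card ≤ m := le_trans (Polynomial.card_roots' q) hdeg
  set d := q.roots.card with hddef
  have hd := sum_disk hu q.roots hroots
  rw [← hζdef, ← hddef, ← hbdef] at hd
  have hpad : ‖(ζ + (m:ℂ) * ((1/(2*b) : ℝ) : ℂ) * Complex.I)‖ ≤ (m:ℝ)/(2*b) := by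
    have heq : ζ + (m:ℂ) * ((1/(2*b) : ℝ) : ℂ) * Complex.I
        = (ζ + (d:ℂ) * ((1/(2*b) : ℝ) : ℂ) * Complex.I)
          + ((m-d:ℕ):ℂ) * ((1/(2*b) : ℝ) : ℂ) * Complex.I := by
      push_cast [Nat.cast_sub hdm]; ring
    have habs2 : ‖(((m-d:ℕ):ℂ) * ((1/(2*b) : ℝ) : ℂ) * Complex.I)‖
        = ((m-d:ℕ):ℝ) * (1/(2*b)) := by
      rw [norm_mul, norm_mul, Complex.norm_I, Complex.norm_natCast, Complex.norm_real, Real.norm_eq_abs,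
        abs_of_pos (by positivity), mul_one]
    rw [heq]
    calc ‖_‖ ≤ _ := norm_add_le _ _
      _ ≤ (d:ℝ)/(2*b) + ((m-d:ℕ):ℝ) * (1/(2*b)) := by rw [habs2]; exact add_le_add hd le_rfl
      _ = (m:ℝ)/(2*b) := by push_cast [Nat.cast_sub hdm]; field_simp; ring
  -- convert to normSq inequality
  have h5 : Complex.normSq (ζ + (m:ℂ) * ((1/(2*b) : ℝ) : ℂ) * Complex.I) ≤ ((m:ℝ)/(2*b))^2 := by
    rw [← Complex.sq_norm]
    exact pow_le_pow_left₀ (norm_nonneg _) hpad 2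
  have h6 : Complex.normSq (ζ + (m:ℂ) * ((1/(2*b) : ℝ) : ℂ) * Complex.I)
      = ζ.re^2 + (ζ.im + m*(1/(2*b)))^2 := by
    simp [Complex.normSq_apply, Complex.add_re, Complex.add_im, Complex.mul_re, Complex.mul_im]
    ring
  rw [h6] at h5
  have hb2 : (2*b) ≠ 0 := by positivity
  have e1 : (ζ.im + m*(1/(2*b)))^2 = ζ.im^2 + m*ζ.im/b + ((m:ℝ)/(2*b))^2 := by
    field_simp; ring
  rw [e1] at h5
  have h9 : ζ.re^2 + ζ.im^2 + m*ζ.im/b ≤ 0 := by linarith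
  have hkey : (ζ.re^2 + ζ.im^2)*b + m*ζ.im ≤ 0 := by
    have h10 := mul_le_mul_of_nonneg_right h9 (le_of_lt hb)
    have e2 : (ζ.re^2 + ζ.im^2 + m*ζ.im/b) * b = (ζ.re^2 + ζ.im^2)*b + m*ζ.im := by
      field_simp
    rw [e2] at h10; linarith
  -- extract the contradiction with v.im > 0
  have h' : (v - u) * ζ = -(m:ℂ) := by linear_combination hmain
  have hre := congrArg Complex.re h'
  have him := congrArg Complex.im h'
  simp only [Complex.mul_re, Complex.mul_im, Complex.sub_re, Complex.sub_im, Complex.neg_re,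
    Complex.neg_im, Complex.natCast_re, Complex.natCast_im, neg_zero] at hre him
  have hcomb : (v.im - u.im) * (ζ.re^2 + ζ.im^2) = (m:ℝ) * ζ.im := by
    linear_combination -ζ.im * hre + ζ.re * him
  have hNζ : 0 < ζ.re^2 + ζ.im^2 := by
    rcases Complex.ext_iff.not.mp hζ0 with h
    have : ζ.re ≠ 0 ∨ ζ.im ≠ 0 := by
      by_contra hc
      push_neg at hc
      exact hζ0 (Complex.ext hc.1 hc.2)
    rcases this with h | h
    · positivity
    · positivity
  nlinarith [mul_pos hv hNζ, hcomb, hkey, mul_pos hu hNζ]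

lemma aeval_id_eq_eval (y : Fin n → ℂ) (q : MvPolynomial (Fin n) ℂ) : aeval y q = eval y q :=
  RingHom.congr_fun (MvPolynomial.coe_aeval_eq_eval (f := y)) q

/-- Evaluating a univariate specialization. -/
lemma eval_aeval_poly (g : Fin n → Polynomial ℂ) (p : MvPolynomial (Fin n) ℂ) (t : ℂ) :
    Polynomial.eval t (aeval g p) = eval (fun i => Polynomial.eval t (g i)) p := by
  have h := MvPolynomial.comp_aeval_apply (Polynomial.aeval t : Polynomial ℂ →ₐ[ℂ] ℂ)
    (f := g) (p := p)
  rw [← aeval_id_eq_eval]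
  rw [show (Polynomial.eval t (aeval g p)) = Polynomial.aeval t (aeval g p) by
    rw [Polynomial.coe_aeval_eq_eval]]
  rw [h]
  simp only [← Polynomial.coe_aeval_eq_eval]

/-- Chain rule for specialization into univariate polynomials. -/
lemma derivative_aeval_poly (g : Fin n → Polynomial ℂ) (p : MvPolynomial (Fin n) ℂ) :
    Polynomial.derivative (aeval g p)
      = ∑ i : Fin n, aeval g (pderiv i p) * Polynomial.derivative (g i) := by
  induction p using MvPolynomial.induction_on with
  | C a => simp
  | add p q hp hq =>
    rw [map_add, map_add, hp, hq, ← Finset.sum_add_distrib]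
    exact Finset.sum_congr rfl fun i _ => by simp only [map_add]; ring
  | mul_X p j hp =>
    simp only [map_mul, aeval_X, Polynomial.derivative_mul, hp]
    rw [Finset.sum_mul]
    have key : ∀ i : Fin n, aeval g (pderiv i (p * X j)) * Polynomial.derivative (g i)
        = (aeval g (pderiv i p) * Polynomial.derivative (g i)) * g j
          + (if i = j then aeval g p * Polynomial.derivative (g i) else 0) := by
      intro i
      rw [pderiv_mul, pderiv_X]
      by_cases h : i = j
      · subst h; simp [Pi.single_eq_same]; ring
      · rw [if_neg h, Pi.single_eq_of_ne (Ne.symm h), mul_zero, add_zero, map_mul, aeval_X, add_zero]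
        ring
    rw [Finset.sum_congr rfl (fun i _ => key i), Finset.sum_add_distrib]
    rw [Finset.sum_ite_eq' Finset.univ j (fun i => aeval g p * Polynomial.derivative (g i))]
    simp only [Finset.mem_univ, if_true]
    try ring

lemma natDegree_aeval_le (T : Finset (Fin n)) (x : Fin n → ℂ) (p : MvPolynomial (Fin n) ℂ)
    (hma : ∀ i, degreeOf i p ≤ 1) :
    (aeval (fun i => if i ∈ T then (Polynomial.X : Polynomial ℂ) else Polynomial.C (x i))
      p).natDegree ≤ T.card := by
  set g : Fin n → Polynomial ℂ :=
    fun i => if i ∈ T then (Polynomial.X : Polynomial ℂ) else Polynomial.C (x i) with hg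
  conv_lhs => rw [p.as_sum]
  rw [map_sum]
  apply Polynomial.natDegree_sum_le_of_forall_le
  intro d hd
  have hd1 : ∀ i, d i ≤ 1 := by
    intro i
    have h2 : degreeOf i p < 2 := lt_of_le_of_lt (hma i) one_lt_two
    have := (MvPolynomial.degreeOf_lt_iff (by norm_num : 0 < 2)).mp h2 d hd
    omega
  rw [aeval_monomial]
  calc (algebraMap ℂ (Polynomial ℂ) (coeff d p) * d.prod fun i k => g i ^ k).natDegree
      ≤ (algebraMap ℂ (Polynomial ℂ) (coeff d p)).natDegree
        + (d.prod fun i k => g i ^ k).natDegree := Polynomial.natDegree_mul_le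
    _ = (d.prod fun i k => g i ^ k).natDegree := by
        rw [Polynomial.algebraMap_eq, Polynomial.natDegree_C, zero_add]
    _ = (∏ i ∈ d.support, g i ^ d i).natDegree := by rw [Finsupp.prod]
    _ ≤ ∑ i ∈ d.support, (g i ^ d i).natDegree := Polynomial.natDegree_prod_le _ _
    _ ≤ ∑ i ∈ d.support, (if i ∈ T then 1 else 0) := by
        apply Finset.sum_le_sum
        intro i _
        by_cases h : i ∈ T
        · simp only [hg, if_pos h, Polynomial.natDegree_X_pow]
          exact hd1 i
        · simp [hg, if_neg h, Polynomial.natDegree_pow]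
    _ = (d.support.filter (· ∈ T)).card := by
        rw [← Finset.sum_filter, Finset.card_eq_sum_ones]
    _ ≤ T.card := Finset.card_le_card (fun i hi => (Finset.mem_filter.mp hi).2)

lemma min'_congr {α : Type*} [LinearOrder α] {s t : Finset α} (h : s = t) (hs : s.Nonempty) :
    s.min' hs = t.min' (h ▸ hs) := by subst h; rfl

lemma key_stability (G : Subgroup (Equiv.Perm (Fin n)))
    (h : MvPolynomial (Fin n) ℂ) (hma : IsMultiaffine h)
    (hsym : ∀ i j : Fin n, j ∈ MulAction.orbit G i → rename (Equiv.swap i j) h = h)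
    (hdiag : ∀ x : Fin n → ℂ, (∀ i, 0 < (x i).im) →
      (∀ i j : Fin n, j ∈ MulAction.orbit G i → x j = x i) → eval x h ≠ 0) :
    IsStable h := by
  classical
  set orbF : Fin n → Finset (Fin n) :=
    fun i => (Set.toFinite (MulAction.orbit G i)).toFinset with horbF
  have horbne : ∀ i, i ∈ orbF i := fun i =>
    (Set.Finite.mem_toFinset _).mpr (MulAction.mem_orbit_self i)
  have horbeq : ∀ i j, j ∈ MulAction.orbit G i → orbF j = orbF i := by
    intro i j hj
    have hset : MulAction.orbit G j = MulAction.orbit G i := MulAction.orbit_eq_iff.mpr hj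
    ext a
    simp only [horbF, Set.Finite.mem_toFinset]
    rw [hset]
  set rep : Fin n → Fin n := fun i => (orbF i).min' ⟨i, horbne i⟩ with hrep
  have hrep_orbit : ∀ i, rep i ∈ MulAction.orbit G i := fun i =>
    (Set.Finite.mem_toFinset _).mp (Finset.min'_mem _ _)
  have hrep_congr : ∀ i j, j ∈ MulAction.orbit G i → rep j = rep i := by
    intro i j hj
    exact min'_congr (horbeq i j hj) _
  have hrep_idem : ∀ i, rep (rep i) = rep i := fun i => hrep_congr i (rep i) (hrep_orbit i)
  have horb_of_rep : ∀ i j, rep i = rep j → j ∈ MulAction.orbit G i := by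
    intro i j hij
    have h1 : MulAction.orbit G (rep i) = MulAction.orbit G i :=
      MulAction.orbit_eq_iff.mpr (hrep_orbit i)
    have h2 : MulAction.orbit G (rep j) = MulAction.orbit G j :=
      MulAction.orbit_eq_iff.mpr (hrep_orbit j)
    have : MulAction.orbit G i = MulAction.orbit G j := by rw [← h1, ← h2, hij]
    rw [this]
    exact MulAction.mem_orbit_self j
  suffices H : ∀ N (x : Fin n → ℂ),
      (Finset.univ.filter (fun i => x i ≠ x (rep i))).card = N →
      (∀ i, 0 < (x i).im) → eval x h ≠ 0 by
    intro x hx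
    exact H _ x rfl hx
  intro N
  induction N using Nat.strong_induction_on with
  | _ N IH =>
  intro x hμ hx
  by_cases h0 : (Finset.univ.filter (fun i => x i ≠ x (rep i))).card = 0
  · -- block-constant case
    have hconst : ∀ k, x k = x (rep k) := by
      intro k
      by_contra hk
      have hmem : k ∈ Finset.univ.filter (fun i => x i ≠ x (rep i)) :=
        Finset.mem_filter.mpr ⟨Finset.mem_univ k, hk⟩
      rw [Finset.card_eq_zero] at h0
      rw [h0] at hmem
      exact absurd hmem (Finset.notMem_empty k)
    apply hdiag x hx
    intro i j hj
    rw [hconst j, hconst i, hrep_congr i j hj]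
  · -- merging step
    obtain ⟨j, hjmem⟩ := Finset.card_pos.mp (Nat.pos_of_ne_zero h0)
    have hj : x j ≠ x (rep j) := (Finset.mem_filter.mp hjmem).2
    set i₀ := rep j with hi₀
    set u := x i₀ with hu_def
    set v := x j with hv_def
    set P : Finset (Fin n) := Finset.univ.filter (fun i => rep i = i₀ ∧ x i = u) with hP
    set T : Finset (Fin n) := insert j P with hT
    have hjP : j ∉ P := by
      intro hmem
      exact hj (Finset.mem_filter.mp hmem).2.2
    have hi₀P : i₀ ∈ P := by
      apply Finset.mem_filter.mpr
      exact ⟨Finset.mem_univ _, by rw [hi₀, hrep_idem], rfl⟩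
    have hrepT : ∀ i ∈ T, rep i = i₀ := by
      intro i hi
      rcases Finset.mem_insert.mp hi with hij | hiP
      · rw [hij]
      · exact (Finset.mem_filter.mp hiP).2.1
    have hi₀T : i₀ ∈ T := Finset.mem_insert_of_mem hi₀P
    have hjT : j ∈ T := Finset.mem_insert_self j P
    -- the merged points
    set xt : ℂ → (Fin n → ℂ) := fun t i => if i ∈ T then t else x i with hxt
    -- measure decreases
    have hdec : ∀ t : ℂ,
        (Finset.univ.filter (fun i => xt t i ≠ xt t (rep i))).card < N := by
      intro t
      have hsub : Finset.univ.filter (fun i => xt t i ≠ xt t (rep i))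
          ⊆ (Finset.univ.filter (fun i => x i ≠ x (rep i))).erase j := by
        intro i hi
        have hiv : xt t i ≠ xt t (rep i) := (Finset.mem_filter.mp hi).2
        have hiT : i ∉ T := by
          intro hiT
          apply hiv
          have h1 : xt t i = t := by simp only [hxt, if_pos hiT]
          have h2 : rep i = i₀ := hrepT i hiT
          have h3 : xt t (rep i) = t := by
            rw [h2]; simp only [hxt, if_pos hi₀T]
          rw [h1, h3]
        have hrepi : rep i ∈ T → rep i = i₀ := by
          intro hmem
          rcases Finset.mem_insert.mp hmem with h1 | h1
          · exfalso
            have hrj : rep j = j := by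
              have h2 := hrep_idem i
              rw [h1] at h2
              exact h2
            exact hj (by rw [hv_def, hu_def, hi₀, hrj])
          · rw [← hrep_idem i]
            exact (Finset.mem_filter.mp h1).2.1
        apply Finset.mem_erase.mpr
        constructor
        · intro hij; rw [hij] at hiT; exact hiT hjT
        apply Finset.mem_filter.mpr
        refine ⟨Finset.mem_univ _, ?_⟩
        by_cases hri : rep i ∈ T
        · have h2 : rep i = i₀ := hrepi hri
          intro hcon
          apply hiT
          rw [hT]
          apply Finset.mem_insert_of_mem
          apply Finset.mem_filter.mpr
          refine ⟨Finset.mem_univ _, h2, ?_⟩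
          rw [hcon, h2]
          try exact hu_def.symm
        · intro hcon
          apply hiv
          have h1 : xt t i = x i := by simp only [hxt, if_neg hiT]
          have h2 : xt t (rep i) = x (rep i) := by simp only [hxt, if_neg hri]
          rw [h1, h2, hcon]
      calc (Finset.univ.filter (fun i => xt t i ≠ xt t (rep i))).card
          ≤ ((Finset.univ.filter (fun i => x i ≠ x (rep i))).erase j).card :=
            Finset.card_le_card hsub
        _ < (Finset.univ.filter (fun i => x i ≠ x (rep i))).card :=
            Finset.card_erase_lt_of_mem hjmem
        _ = N := hμ
    -- the univariate specialization q
    set g : Fin n → Polynomial ℂ :=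
      fun i => if i ∈ T then (Polynomial.X : Polynomial ℂ) else Polynomial.C (x i) with hg
    set q : Polynomial ℂ := aeval g h with hqdef
    have hgpt : ∀ t : ℂ, (fun i => Polynomial.eval t (g i)) = xt t := by
      intro t
      funext i
      by_cases hi : i ∈ T <;> simp [hg, hxt, hi]
    have hqeval : ∀ t, q.eval t = eval (xt t) h := by
      intro t
      rw [hqdef, eval_aeval_poly, hgpt]
    have hqroots : ∀ t : ℂ, 0 < t.im → q.eval t ≠ 0 := by
      intro t ht
      rw [hqeval]
      apply IH _ (hdec t) (xt t) rfl
      intro i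
      by_cases hi : i ∈ T <;> simp only [hxt, hi, if_pos, if_neg, if_true, if_false]
      · exact ht
      · exact hx i
    have hdeg : q.natDegree ≤ T.card := natDegree_aeval_le T x h hma
    have hTcard : 1 ≤ T.card := Finset.card_pos.mpr ⟨j, hjT⟩
    have hu : 0 < u.im := hx i₀
    have hv : 0 < v.im := hx j
    have hUL := UL hdeg hTcard hqroots hu hv
    -- the affine polynomial Q in the variable j
    set y : Fin n → ℂ := fun i => if i ∈ P then u else x i with hy
    set gQ : Fin n → Polynomial ℂ :=
      fun i => if i ∈ ({j} : Finset (Fin n)) then (Polynomial.X : Polynomial ℂ)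
        else Polynomial.C (y i) with hgQ
    set Q : Polynomial ℂ := aeval gQ h with hQdef
    have hgQpt : ∀ t : ℂ, (fun i => Polynomial.eval t (gQ i)) = (fun i => if i = j then t else y i) := by
      intro t
      funext i
      by_cases hi : i = j <;> simp [hgQ, hi]
    have hQeval : ∀ t, Q.eval t = eval (fun i => if i = j then t else y i) h := by
      intro t
      rw [hQdef, eval_aeval_poly, hgQpt]
    have hQdeg : Q.natDegree ≤ 1 := by
      have := natDegree_aeval_le ({j} : Finset (Fin n)) y h hma
      rwa [Finset.card_singleton] at this
    -- point identities
    have hxv : (fun i => if i = j then v else y i) = x := by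
      funext i
      by_cases hij : i = j
      · rw [if_pos hij, hij, hv_def]
      · rw [if_neg hij, hy]
        by_cases hiP : i ∈ P
        · simp only [if_pos hiP]
          exact ((Finset.mem_filter.mp hiP).2.2).symm
        · simp only [if_neg hiP]
    have hxu : (fun i => if i = j then u else y i) = xt u := by
      funext i
      by_cases hij : i = j
      · rw [if_pos hij, hxt]
        simp only [hij, if_pos hjT]
      · rw [if_neg hij, hy, hxt]
        by_cases hiP : i ∈ P
        · have hiT : i ∈ T := Finset.mem_insert_of_mem hiP
          simp only [if_pos hiP, if_pos hiT]
        · have hiT : i ∉ T := by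
            intro hc
            rcases Finset.mem_insert.mp hc with hc | hc
            · exact hij hc
            · exact hiP hc
          simp only [if_neg hiP, if_neg hiT]
    -- derivative identities
    set D : ℂ := eval (xt u) (pderiv j h) with hD
    have horb_pair : ∀ i ∈ T, i ≠ j → j ∈ MulAction.orbit G i := by
      intro i hi _
      exact horb_of_rep i j (by rw [hrepT i hi, hi₀])
    have hDi : ∀ i ∈ T, eval (xt u) (pderiv i h) = D := by
      intro i hi
      by_cases hij : i = j
      · rw [hij, hD]
      · have hjorb := horb_pair i hi hij
        have hswap : rename (Equiv.swap i j) h = h := hsym i j hjorb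
        have e : pderiv ((Equiv.swap i j) j) (rename (Equiv.swap i j) h)
            = rename (Equiv.swap i j) (pderiv j h) :=
          pderiv_rename (Equiv.injective _) j h
        rw [Equiv.swap_apply_right, hswap] at e
        rw [e, eval_rename]
        have hpt : (xt u) ∘ ⇑(Equiv.swap i j) = xt u := by
          funext k
          simp only [Function.comp_apply, hxt]
          rcases eq_or_ne k i with rfl | hki
          · rw [Equiv.swap_apply_left, if_pos hi, if_pos hjT]
          · rcases eq_or_ne k j with rfl | hkj
            · rw [Equiv.swap_apply_right, if_pos hjT, if_pos hi]
            · rw [Equiv.swap_apply_of_ne_of_ne hki hkj]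
        rw [hpt, hD]
    have hqder : Polynomial.eval u (Polynomial.derivative q) = (T.card : ℂ) * D := by
      rw [hqdef, derivative_aeval_poly, Polynomial.eval_finset_sum]
      have hterm : ∀ i : Fin n,
          Polynomial.eval u (aeval g (pderiv i h) * Polynomial.derivative (g i))
            = if i ∈ T then eval (xt u) (pderiv i h) else 0 := by
        intro i
        rw [Polynomial.eval_mul]
        by_cases hi : i ∈ T
        · rw [if_pos hi]
          have : g i = Polynomial.X := by rw [hg]; simp [hi]
          rw [this, Polynomial.derivative_X, Polynomial.eval_one, mul_one]
          rw [eval_aeval_poly, hgpt]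
        · rw [if_neg hi]
          have : g i = Polynomial.C (x i) := by rw [hg]; simp [hi]
          rw [this, Polynomial.derivative_C, Polynomial.eval_zero, mul_zero]
      rw [Finset.sum_congr rfl (fun i _ => hterm i)]
      rw [Finset.sum_ite_mem]
      rw [Finset.univ_inter]
      rw [Finset.sum_congr rfl (fun i hi => hDi i hi)]
      rw [Finset.sum_const, nsmul_eq_mul]
    -- Q-derivative identity
    have hQD : Q.coeff 1 = D := by
      have hQform := Polynomial.eq_X_add_C_of_natDegree_le_one hQdeg
      have hQder : Polynomial.derivative Q = Polynomial.C (Q.coeff 1) := by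
        conv_lhs => rw [hQform]
        simp
      have h1 : Polynomial.eval u (Polynomial.derivative Q) = Q.coeff 1 := by
        rw [hQder, Polynomial.eval_C]
      rw [← h1, hQdef, derivative_aeval_poly, Polynomial.eval_finset_sum]
      have hterm : ∀ i : Fin n,
          Polynomial.eval u (aeval gQ (pderiv i h) * Polynomial.derivative (gQ i))
            = if i = j then eval (xt u) (pderiv j h) else 0 := by
        intro i
        rw [Polynomial.eval_mul]
        by_cases hi : i = j
        · rw [if_pos hi]
          have : gQ i = Polynomial.X := by rw [hgQ]; simp [hi]
          rw [this, Polynomial.derivative_X, Polynomial.eval_one, mul_one, hi]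
          rw [eval_aeval_poly, hgQpt, hxu]
        · rw [if_neg hi]
          have : gQ i = Polynomial.C (y i) := by rw [hgQ]; simp [hi]
          rw [this, Polynomial.derivative_C, Polynomial.eval_zero, mul_zero]
      rw [Finset.sum_congr rfl (fun i _ => hterm i)]
      rw [Finset.sum_ite_eq' Finset.univ j]
      simp only [Finset.mem_univ, if_true, hD]
    -- the main identity : eval x h = q.eval u + (v - u) * D
    have hQv : eval x h = Q.eval v := by rw [hQeval v, hxv]
    have hQu : q.eval u = Q.eval u := by
      rw [hQeval u, hxu, hqeval u]
    have hQaffine : ∀ t, Q.eval t = Q.coeff 1 * t + Q.coeff 0 := by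
      intro t
      conv_lhs => rw [Polynomial.eq_X_add_C_of_natDegree_le_one hQdeg]
      simp
    have hmain : eval x h = q.eval u + (v - u) * D := by
      rw [hQv, hQaffine v, ← hQD, hQu, hQaffine u]
      ring
    -- conclude
    intro hzero
    apply hUL
    rw [hqder]
    rw [hmain] at hzero
    linear_combination (T.card : ℂ) * hzero

lemma coeff_rename_perm (π : Equiv.Perm (Fin n)) (f : MvPolynomial (Fin n) ℂ)
    (e : Fin n →₀ ℕ) :
    coeff e (rename ⇑π f) = coeff (e.mapDomain ⇑π⁻¹) f := by
  have h1 : e = Finsupp.mapDomain ⇑π (e.mapDomain ⇑π⁻¹) := by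
    rw [← Finsupp.mapDomain_comp]
    have h2 : ⇑π ∘ ⇑π⁻¹ = id := by funext a; simp
    rw [h2, Finsupp.mapDomain_id]
  conv_lhs => rw [h1]
  exact coeff_rename_mapDomain ⇑π (Equiv.injective π) f _

lemma coeff_eq_zero_two {f : MvPolynomial (Fin n) ℂ} (hma : IsMultiaffine f)
    {d : Fin n →₀ ℕ} {k : Fin n} (hk : 2 ≤ d k) : coeff d f = 0 := by
  by_contra hc
  have hd : d ∈ f.support := MvPolynomial.mem_support_iff.mpr hc
  have h2 : degreeOf k f < 2 := lt_of_le_of_lt (hma k) one_lt_two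
  have := (MvPolynomial.degreeOf_lt_iff (by norm_num : 0 < 2)).mp h2 d hd
  omega

lemma symmG_multiaffine (G : Subgroup (Equiv.Perm (Fin n))) (f : MvPolynomial (Fin n) ℂ)
    (hma : IsMultiaffine f) : IsMultiaffine (symmG G f) := by
  intro i
  rw [symmG, MvPolynomial.smul_eq_C_mul]
  apply le_trans (MvPolynomial.degreeOf_C_mul_le _ _ _)
  have hterm : ∀ π : Equiv.Perm (Fin n), degreeOf i (rename ⇑π f) ≤ 1 := by
    intro π
    have h1 := MvPolynomial.degreeOf_rename_of_injective (p := f) (Equiv.injective π) (π.symm i)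
    rw [Equiv.apply_symm_apply] at h1
    rw [h1]
    exact hma _
  have : ∀ s : Finset ↥G, degreeOf i (∑ σ ∈ s, rename ⇑(σ : Equiv.Perm (Fin n)) f) ≤ 1 := by
    intro s
    induction s using Finset.induction_on with
    | empty => simp
    | insert _ _ hσs ih =>
      rw [Finset.sum_insert hσs]
      exact le_trans (MvPolynomial.degreeOf_add_le _ _ _) (max_le (hterm _) ih)
  exact this Finset.univ

lemma symmG_swap_invariant (G : Subgroup (Equiv.Perm (Fin n))) (hG : OrbitHomogeneous G)
    (f : MvPolynomial (Fin n) ℂ) (hma : IsMultiaffine f) {i j : Fin n}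
    (hj : j ∈ MulAction.orbit G i) :
    rename ⇑(Equiv.swap i j) (symmG G f) = symmG G f := by
  classical
  set τ := Equiv.swap i j with hτ
  have htrans : ∀ a b k : Fin n, a ∈ MulAction.orbit G b → b ∈ MulAction.orbit G k →
      a ∈ MulAction.orbit G k := by
    intro a b k hab hbk
    rwa [MulAction.orbit_eq_iff.mpr hbk] at hab
  have hij' : i ∈ MulAction.orbit G j := by
    rw [MulAction.orbit_eq_iff.mpr hj]
    exact MulAction.mem_orbit_self i
  have horb : ∀ k b : Fin n, τ b ∈ MulAction.orbit G k ↔ b ∈ MulAction.orbit G k := by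
    intro k b
    have hijk : i ∈ MulAction.orbit G k ↔ j ∈ MulAction.orbit G k :=
      ⟨fun hik => htrans j i k hj hik, fun hjk => htrans i j k hij' hjk⟩
    rcases eq_or_ne b i with rfl | hbi
    · rw [hτ, Equiv.swap_apply_left]; exact hijk.symm
    · rcases eq_or_ne b j with rfl | hbj
      · rw [hτ, Equiv.swap_apply_right]; exact hijk
      · rw [hτ, Equiv.swap_apply_of_ne_of_ne hbi hbj]
  rw [symmG, map_smul, map_sum]
  congr 1
  apply MvPolynomial.ext
  intro e
  rw [MvPolynomial.coeff_sum, MvPolynomial.coeff_sum]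
  have hterm : ∀ σ : ↥G,
      coeff e (rename ⇑τ (rename ⇑(σ : Equiv.Perm (Fin n)) f))
        = coeff (Finsupp.mapDomain ⇑((σ : Equiv.Perm (Fin n)))⁻¹
            (Finsupp.mapDomain ⇑τ⁻¹ e)) f := by
    intro σ
    rw [rename_rename]
    rw [show ⇑τ ∘ ⇑(σ : Equiv.Perm (Fin n)) = ⇑(τ * (σ : Equiv.Perm (Fin n)))
      from (Equiv.Perm.coe_mul _ _).symm]
    rw [coeff_rename_perm]
    rw [show ⇑(τ * (σ : Equiv.Perm (Fin n)))⁻¹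
        = ⇑((σ : Equiv.Perm (Fin n)))⁻¹ ∘ ⇑τ⁻¹ by
      rw [mul_inv_rev]; exact Equiv.Perm.coe_mul _ _]
    rw [Finsupp.mapDomain_comp]
  have hterm2 : ∀ σ : ↥G, coeff e (rename ⇑(σ : Equiv.Perm (Fin n)) f)
      = coeff (Finsupp.mapDomain ⇑((σ : Equiv.Perm (Fin n)))⁻¹ e) f :=
    fun σ => coeff_rename_perm _ f e
  rw [Finset.sum_congr rfl (fun σ _ => hterm σ), Finset.sum_congr rfl (fun σ _ => hterm2 σ)]
  by_cases hbig : ∃ k, 2 ≤ e k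
  · obtain ⟨k, hk⟩ := hbig
    have hz : ∀ (π : Equiv.Perm (Fin n)) (d : Fin n →₀ ℕ) (k' : Fin n), 2 ≤ d k' →
        coeff (Finsupp.mapDomain ⇑π d) f = 0 := by
      intro π d k' hk'
      apply coeff_eq_zero_two hma (k := π k')
      rw [Finsupp.mapDomain_apply (Equiv.injective π)]
      exact hk'
    have hz1 : ∀ σ : ↥G,
        coeff (Finsupp.mapDomain ⇑((σ : Equiv.Perm (Fin n)))⁻¹
          (Finsupp.mapDomain ⇑τ⁻¹ e)) f = 0 := by
      intro σ
      apply hz _ _ (τ⁻¹ k)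
      rw [Finsupp.mapDomain_apply (Equiv.injective _)]
      exact hk
    have hz2 : ∀ σ : ↥G,
        coeff (Finsupp.mapDomain ⇑((σ : Equiv.Perm (Fin n)))⁻¹ e) f = 0 :=
      fun σ => hz _ _ k hk
    rw [Finset.sum_congr rfl (fun σ _ => hz1 σ), Finset.sum_congr rfl (fun σ _ => hz2 σ)]
  · push_neg at hbig
    set A := e.support with hA
    have himgO : ∀ k : Fin n, ⇑τ '' (MulAction.orbit G k) = MulAction.orbit G k := by
      intro k
      rw [Equiv.image_eq_preimage_symm]
      rw [hτ, Equiv.symm_swap]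
      ext b
      rw [Set.mem_preimage]
      exact horb k b
    have hcond : ∀ k : Fin n,
        (((A.image ⇑τ) : Set (Fin n)) ∩ MulAction.orbit G k).ncard
          = ((A : Set (Fin n)) ∩ MulAction.orbit G k).ncard := by
      intro k
      have h1 : ((A.image ⇑τ) : Set (Fin n)) ∩ MulAction.orbit G k
          = ⇑τ '' ((A : Set (Fin n)) ∩ MulAction.orbit G k) := by
        rw [Finset.coe_image, Set.image_inter (Equiv.injective τ), himgO k]
      rw [h1, Set.ncard_image_of_injective _ (Equiv.injective τ)]
    obtain ⟨σ₀, hσ₀G, hσ₀⟩ := hG (A.image ⇑τ) A hcond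
    have hiff : ∀ a : Fin n, (τ a ∈ A ↔ σ₀ a ∈ A) := by
      intro a
      have h2 : σ₀ a ∈ A ↔ a ∈ A.image ⇑τ := by
        constructor
        · intro hmem
          rw [← hσ₀] at hmem
          obtain ⟨b, hb, hba⟩ := Finset.mem_image.mp hmem
          rwa [← Equiv.injective σ₀ hba]
        · intro hmem
          have h4 := Finset.mem_image_of_mem ⇑σ₀ hmem
          rwa [hσ₀] at h4
      have h3 : a ∈ A.image ⇑τ ↔ τ a ∈ A := by
        constructor
        · intro hmem
          obtain ⟨b, hb, hba⟩ := Finset.mem_image.mp hmem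
          have : b = τ a := by
            rw [← hba, hτ, Equiv.swap_apply_self]
          rwa [← this]
        · intro hmem
          exact Finset.mem_image.mpr ⟨τ a, hmem, by rw [hτ, Equiv.swap_apply_self]⟩
      rw [h2, h3]
    have hval : ∀ a : Fin n, e (τ a) = e (σ₀ a) := by
      intro a
      by_cases hmem : τ a ∈ A
      · have h2 : σ₀ a ∈ A := (hiff a).mp hmem
        have e1 : e (τ a) ≠ 0 := Finsupp.mem_support_iff.mp hmem
        have e2 : e (σ₀ a) ≠ 0 := Finsupp.mem_support_iff.mp h2
        have e3 := hbig (τ a)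
        have e4 := hbig (σ₀ a)
        omega
      · have h2 : σ₀ a ∉ A := fun hc => hmem ((hiff a).mpr hc)
        rw [Finsupp.notMem_support_iff.mp hmem, Finsupp.notMem_support_iff.mp h2]
    have hmapeq : Finsupp.mapDomain ⇑τ⁻¹ e = Finsupp.mapDomain ⇑σ₀⁻¹ e := by
      ext a
      rw [show ⇑τ⁻¹ = ⇑(τ⁻¹ : Equiv.Perm (Fin n)) from rfl]
      rw [Finsupp.mapDomain_equiv_apply, Finsupp.mapDomain_equiv_apply]
      have s1 : (τ⁻¹ : Equiv.Perm (Fin n)).symm a = τ a := rfl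
      have s2 : (σ₀⁻¹ : Equiv.Perm (Fin n)).symm a = σ₀ a := rfl
      rw [s1, s2]
      exact hval a
    rw [Finset.sum_congr rfl (fun σ _ => by rw [hmapeq])]
    have hcomb : ∀ σ : ↥G,
        Finsupp.mapDomain ⇑((σ : Equiv.Perm (Fin n)))⁻¹ (Finsupp.mapDomain ⇑σ₀⁻¹ e)
          = Finsupp.mapDomain ⇑((σ₀ * (σ : Equiv.Perm (Fin n))))⁻¹ e := by
      intro σ
      rw [← Finsupp.mapDomain_comp]
      have hco : ⇑((σ₀ * ((σ : Equiv.Perm (Fin n)))))⁻¹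
          = ⇑(((σ : Equiv.Perm (Fin n))))⁻¹ ∘ ⇑σ₀⁻¹ := by
        rw [mul_inv_rev]
        exact Equiv.Perm.coe_mul _ _
      rw [hco]
    rw [Finset.sum_congr rfl (fun σ _ => by rw [hcomb σ])]
    set g₀ : ↥G := ⟨σ₀, hσ₀G⟩ with hg₀
    apply Fintype.sum_equiv (Equiv.mulLeft g₀)
    intro σ
    rfl

end AuxStability

/-- If G is orbit homogeneous then the G-symmetrizer preserves stability of
multiaffine polynomials. -/
theorem orbit_homogeneous_symmetrizer_preserves_stability
    (n : ℕ) (hn : 1 ≤ n) (G : Subgroup (Equiv.Perm (Fin n)))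
    (hG : OrbitHomogeneous G) :
    ∀ f : MvPolynomial (Fin n) ℂ, IsMultiaffine f → IsStable f →
      IsStable (symmG G f) := by
  intro f hma hst
  apply key_stability G (symmG G f) (symmG_multiaffine G f hma)
  · intro i j hj
    exact symmG_swap_invariant G hG f hma hj
  · intro x hx hconst
    have hcardpos : 0 < Nat.card ↥G := Nat.card_pos
    have hcne : ((Nat.card ↥G : ℂ)) ≠ 0 := Nat.cast_ne_zero.mpr (Nat.pos_iff_ne_zero.mp hcardpos)
    rw [symmG, MvPolynomial.smul_eq_C_mul, eval_mul, eval_C, map_sum]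
    have hterm : ∀ σ : ↥G, eval x (rename ⇑(σ : Equiv.Perm (Fin n)) f) = eval x f := by
      intro σ
      rw [eval_rename]
      have hpt : x ∘ ⇑(σ : Equiv.Perm (Fin n)) = x := by
        funext k
        have hmem : (⇑(σ : Equiv.Perm (Fin n)) k) ∈ MulAction.orbit G k :=
          MulAction.mem_orbit k σ
        exact hconst k _ hmem
      rw [hpt]
    rw [Finset.sum_congr rfl (fun σ _ => hterm σ), Finset.sum_const, nsmul_eq_mul,
      Finset.card_univ, ← Nat.card_eq_fintype_card]
    exact mul_ne_zero (inv_ne_zero hcne) (mul_ne_zero hcne (hst x hx))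
end

section
/- Let n ≥ 1 and let {c_σ : σ ∈ S_n} be complex numbers. The multiaffine polynomial P(z_1,…,z_n,w_1,…,w_n) = ∑_{σ∈S_n} c_σ ∏_{j=1}^n (z_{σ(j)} − w_j) is Grace-like if and only if the polynomial Q(z_1,…,z_n,w_1,…,w_n) = ∑_{σ∈S_n} c_σ ∏_{j=1}^n (z_{σ(j)} + w_j) is stable. -/
open MvPolynomial
open scoped Classical

/-- A multiaffine polynomial `P(z,w)` (in variables indexed by `Fin n ⊕ Fin n`,
`Sum.inl` for the z's and `Sum.inr` for the w's) is Grace-like if it is nonvanishing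
whenever the points z₁,…,zₙ are strictly separated from w₁,…,wₙ by a circle of the
Riemann sphere, i.e. whenever some Möbius transformation φ(z) = (az+b)/(cz+d),
ad - bc ≠ 0, sends all zᵢ into the open upper half-plane and all wⱼ into the open
lower half-plane. -/
def GraceLike {n : ℕ} (P : MvPolynomial (Fin n ⊕ Fin n) ℂ) : Prop :=
  ∀ z w : Fin n → ℂ,
    (∃ a b c d : ℂ, a * d - b * c ≠ 0 ∧
      (∀ i, 0 < ((a * z i + b) / (c * z i + d)).im) ∧
      (∀ j, ((a * w j + b) / (c * w j + d)).im < 0)) →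
    eval (Sum.elim z w) P ≠ 0

lemma mobius_sub (a b c d x y : ℂ) (hx : c * x + d ≠ 0) (hy : c * y + d ≠ 0) :
    (a * x + b) / (c * x + d) - (a * y + b) / (c * y + d)
      = (a * d - b * c) * (x - y) / ((c * x + d) * (c * y + d)) := by
  rw [div_sub_div _ _ hx hy]
  ring

lemma denom_ne {a b c d t : ℂ} (h : ((a * t + b) / (c * t + d)).im ≠ 0) :
    c * t + d ≠ 0 := by
  intro h0
  simp [h0] at h

/-- `P = ∑_σ c_σ ∏_j (z_{σ(j)} - w_j)` is Grace-like iff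
`Q = ∑_σ c_σ ∏_j (z_{σ(j)} + w_j)` is stable. -/
theorem graceLike_iff_stable (n : ℕ) (hn : 1 ≤ n) (c : Equiv.Perm (Fin n) → ℂ) :
    GraceLike (∑ σ : Equiv.Perm (Fin n), c σ • ∏ j : Fin n,
        (X (Sum.inl (σ j)) - X (Sum.inr j) : MvPolynomial (Fin n ⊕ Fin n) ℂ)) ↔
    IsStable (∑ σ : Equiv.Perm (Fin n), c σ • ∏ j : Fin n,
        (X (Sum.inl (σ j)) + X (Sum.inr j) : MvPolynomial (Fin n ⊕ Fin n) ℂ)) := by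
  have evalP : ∀ z w : Fin n → ℂ,
      eval (Sum.elim z w) (∑ σ : Equiv.Perm (Fin n), c σ • ∏ j : Fin n,
        (X (Sum.inl (σ j)) - X (Sum.inr j) : MvPolynomial (Fin n ⊕ Fin n) ℂ))
      = ∑ σ : Equiv.Perm (Fin n), c σ * ∏ j : Fin n, (z (σ j) - w j) := by
    intro z w; simp [smul_eq_C_mul]
  have evalQ : ∀ z w : Fin n → ℂ,
      eval (Sum.elim z w) (∑ σ : Equiv.Perm (Fin n), c σ • ∏ j : Fin n,
        (X (Sum.inl (σ j)) + X (Sum.inr j) : MvPolynomial (Fin n ⊕ Fin n) ℂ))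
      = ∑ σ : Equiv.Perm (Fin n), c σ * ∏ j : Fin n, (z (σ j) + w j) := by
    intro z w; simp [smul_eq_C_mul]
  constructor
  · intro hG x hx
    have h := hG (fun i => x (Sum.inl i)) (fun j => - x (Sum.inr j))
      ⟨1, 0, 0, 1, by norm_num, by simpa using fun i => hx (Sum.inl i),
        by simpa using fun j => hx (Sum.inr j)⟩
    rw [evalP] at h
    have hx' : x = Sum.elim (fun i => x (Sum.inl i)) (fun j => x (Sum.inr j)) := by
      funext t; cases t <;> rfl
    rw [hx', evalQ]
    simpa [sub_neg_eq_add] using h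
  · intro hS z w ⟨a, b, c', d, hdet, hz, hw⟩
    have hzd : ∀ i, c' * z i + d ≠ 0 := fun i => denom_ne (ne_of_gt (hz i))
    have hwd : ∀ j, c' * w j + d ≠ 0 := fun j => denom_ne (ne_of_lt (hw j))
    set φ : ℂ → ℂ := fun t => (a * t + b) / (c' * t + d) with hφ
    have hQ := hS (Sum.elim (fun i => φ (z i)) (fun j => - φ (w j)))
      (by rintro (i | j)
          · exact hz i
          · simpa using hw j)
    rw [evalQ] at hQ
    set D : ℂ := (∏ i : Fin n, (c' * z i + d)) * ∏ j : Fin n, (c' * w j + d) with hD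
    have hDne : D ≠ 0 := mul_ne_zero (Finset.prod_ne_zero_iff.2 fun i _ => hzd i)
      (Finset.prod_ne_zero_iff.2 fun j _ => hwd j)
    have key : ∑ σ : Equiv.Perm (Fin n), c σ * ∏ j : Fin n, (φ (z (σ j)) + - φ (w j))
        = ((a * d - b * c') ^ n / D) *
          ∑ σ : Equiv.Perm (Fin n), c σ * ∏ j : Fin n, (z (σ j) - w j) := by
      rw [Finset.mul_sum]
      refine Finset.sum_congr rfl fun σ _ => ?_
      have hprod : ∏ j : Fin n, (φ (z (σ j)) + - φ (w j))
          = ∏ j : Fin n, ((a * d - b * c') * (z (σ j) - w j)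
              / ((c' * z (σ j) + d) * (c' * w j + d))) := by
        refine Finset.prod_congr rfl fun j _ => ?_
        rw [← sub_eq_add_neg]
        exact mobius_sub a b c' d _ _ (hzd _) (hwd _)
      rw [hprod, Finset.prod_div_distrib, Finset.prod_mul_distrib,
        Finset.prod_mul_distrib, Finset.prod_const]
      have hperm : ∏ j : Fin n, (c' * z (σ j) + d) = ∏ i : Fin n, (c' * z i + d) :=
        Equiv.prod_comp σ (fun i => c' * z i + d)
      rw [hperm, ← hD]
      rw [Finset.card_univ, Fintype.card_fin]
      field_simp
    rw [key] at hQ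
    rw [evalP]
    intro h0
    rw [h0, mul_zero] at hQ
    exact hQ rfl
end

section
/- Let n ≥ 1 and let M_n denote the space of multiaffine complex polynomials in variables z_1,…,z_n. Let T : M_n → M_n be a linear transformation whose image has dimension at least 2. Then T maps every stable polynomial in M_n to a stable polynomial or to the zero polynomial if and only if the polynomial T(∏_{i=1}^n (z_i + w_i)) ∈ ℂ[z_1,…,z_n,w_1,…,w_n] (where T acts on the z-variables, treating the w_i as coefficients) is stable in the 2n variables z_1,…,z_n,w_1,…,w_n. -/
open MvPolynomial
open scoped Classical

/-- The space `M_n` of multiaffine complex polynomials in `n` variables, i.e. those of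
degree at most 1 in each variable, as a submodule of `ℂ[z₁,…,zₙ]`. -/
noncomputable def MultiaffineSubmodule (n : ℕ) : Submodule ℂ (MvPolynomial (Fin n) ℂ) where
  carrier := {f | ∀ i, degreeOf i f ≤ 1}
  add_mem' := fun hf hg i =>
    le_trans (degreeOf_add_le i _ _) (max_le (hf i) (hg i))
  zero_mem' := fun i => by simp
  smul_mem' := fun c f hf i => by
    rw [smul_eq_C_mul]
    calc degreeOf i (C c * f) ≤ degreeOf i (C c : MvPolynomial (Fin n) ℂ) + degreeOf i f :=
          degreeOf_mul_le i _ _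
      _ ≤ degreeOf i f := by simp
      _ ≤ 1 := hf i

/-- The multiaffine monomial `z^S = ∏_{i ∈ S} z_i` lies in `M_n`. -/
lemma prodX_mem_multiaffine {n : ℕ} (S : Finset (Fin n)) :
    (∏ j ∈ S, (X j : MvPolynomial (Fin n) ℂ)) ∈ MultiaffineSubmodule n := by
  intro i
  refine le_trans (degreeOf_prod_le i S _) ?_
  have : ∀ j ∈ S, degreeOf i (X j : MvPolynomial (Fin n) ℂ) = if i = j then 1 else 0 :=
    fun j _ => degreeOf_X i j
  rw [Finset.sum_congr rfl this, Finset.sum_ite_eq]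
  split <;> simp

set_option maxHeartbeats 1000000
set_option synthInstance.maxHeartbeats 400000

noncomputable abbrev Complex.abs : AbsoluteValue ℂ ℝ := NormedField.toAbsoluteValue ℂ

lemma Complex.abs_ofReal (r : ℝ) : Complex.abs (r : ℂ) = |r| := by
  show ‖(r : ℂ)‖ = |r|
  rw [Complex.norm_real, Real.norm_eq_abs]

noncomputable def lineRestrict {σ : Type*} (x v : σ → ℂ) :
    MvPolynomial σ ℂ →+* Polynomial ℂ :=
  MvPolynomial.eval₂Hom (Polynomial.C)
    (fun j => Polynomial.C (x j) + Polynomial.C (v j) * Polynomial.X)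

lemma lineRestrict_eval {σ : Type*} (x v : σ → ℂ) (p : MvPolynomial σ ℂ) (s : ℂ) :
    (lineRestrict x v p).eval s = MvPolynomial.eval (fun j => x j + v j * s) p := by
  rw [lineRestrict]
  have : Polynomial.eval s (eval₂ (Polynomial.C)
      (fun j => Polynomial.C (x j) + Polynomial.C (v j) * Polynomial.X) p) =
      (Polynomial.evalRingHom s) (eval₂ (Polynomial.C)
      (fun j => Polynomial.C (x j) + Polynomial.C (v j) * Polynomial.X) p) := rfl
  rw [coe_eval₂Hom, this, MvPolynomial.eval₂_comp_left (Polynomial.evalRingHom s)]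
  rw [MvPolynomial.eval, MvPolynomial.eval₂Hom]
  congr 1
  · ext a; simp
  · funext j; simp

lemma ball_infinite {δ : ℝ} (hδ : 0 < δ) : (Metric.ball (0:ℂ) δ).Infinite := by
  have h1 : (Set.Ioo (0:ℝ) δ).Infinite := Set.Ioo_infinite hδ
  have h2 : ((fun t : ℝ => (t:ℂ)) '' (Set.Ioo 0 δ)).Infinite :=
    h1.image (Complex.ofReal_injective.injOn)
  refine h2.mono ?_
  rintro z ⟨t, ⟨ht0, htδ⟩, rfl⟩
  simp only [Metric.mem_ball, Complex.dist_eq, sub_zero]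
  rw [Complex.norm_real, Real.norm_eq_abs, abs_of_pos ht0]
  exact htδ

/-- A nonzero polynomial has a nonvanishing point with all coordinates in `H`. -/
lemma exists_upper_ne_zero {σ : Type*} [Fintype σ] {P : MvPolynomial σ ℂ} (hP : P ≠ 0) :
    ∃ x : σ → ℂ, (∀ i, 0 < (x i).im) ∧ eval x P ≠ 0 := by
  by_contra hcon
  push_neg at hcon
  apply hP
  apply MvPolynomial.funext (q := 0)
  intro y
  simp only [map_zero]
  set v : σ → ℂ := fun j => y j - Complex.I with hv
  set Mv : ℝ := ∑ j, Complex.abs (v j) with hM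
  have hMnn : 0 ≤ Mv := Finset.sum_nonneg fun j _ => (Complex.abs.nonneg _)
  set δ : ℝ := 1 / (1 + Mv) with hδdef
  have hδ : 0 < δ := by positivity
  have hroots : ∀ s ∈ Metric.ball (0:ℂ) δ,
      (lineRestrict (fun _ => Complex.I) v P).eval s = 0 := by
    intro s hs
    rw [lineRestrict_eval]
    apply hcon
    intro i
    simp only [Complex.add_im, Complex.I_im]
    have h1 : |(v i * s).im| ≤ Complex.abs (v i * s) := Complex.abs_im_le_norm _
    have h2 : Complex.abs (v i * s) < 1 := by
      rw [map_mul]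
      have h3 : Complex.abs (v i) ≤ Mv := by
        rw [hM]
        exact Finset.single_le_sum (f := fun j => Complex.abs (v j))
          (fun j _ => Complex.abs.nonneg _) (Finset.mem_univ i)
      have h4 : Complex.abs s < δ := by
        exact (by simpa [Complex.dist_eq] using hs : ‖s‖ < δ)
      calc Complex.abs (v i) * Complex.abs s ≤ Mv * Complex.abs s := by
            apply mul_le_mul_of_nonneg_right h3 (Complex.abs.nonneg _)
        _ ≤ Mv * δ := by
            apply mul_le_mul_of_nonneg_left h4.le hMnn
        _ < (1 + Mv) * δ := by nlinarith
        _ = 1 := by rw [hδdef]; field_simp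
    have := (abs_lt.mp (lt_of_le_of_lt h1 h2)).1
    linarith
  have hzero : lineRestrict (fun _ => Complex.I) v P = 0 := by
    apply Polynomial.eq_zero_of_infinite_isRoot
    apply (ball_infinite hδ).mono
    intro s hs
    exact hroots s hs
  have := lineRestrict_eval (fun _ => Complex.I) v P 1
  rw [hzero] at this
  simp only [Polynomial.eval_zero] at this
  rw [show (fun j => Complex.I + v j * 1) = y by funext j; simp [hv]] at this
  exact this.symm

/-- Key lemma (constant-coefficient extraction): if `P + w Q` is nonvanishing for all
arguments in the upper half-plane, then `P` is zero or stable. -/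
lemma constant_coeff_stable {σ : Type*} [Fintype σ] {P Q : MvPolynomial σ ℂ}
    (h : ∀ x : σ → ℂ, (∀ i, 0 < (x i).im) → ∀ w : ℂ, 0 < w.im →
      eval x P + w * eval x Q ≠ 0) :
    P = 0 ∨ IsStable P := by
  by_cases hP : P = 0
  · exact Or.inl hP
  right
  intro x0 hx0
  by_contra hP0
  obtain ⟨x1, hx1, hP1⟩ := exists_upper_ne_zero hP
  set v : σ → ℂ := fun j => x1 j - x0 j with hv
  set g := lineRestrict x0 v P with hgdef
  set q := lineRestrict x0 v Q with hqdef
  have hgs : ∀ s, g.eval s = eval (fun j => x0 j + v j * s) P :=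
    fun s => lineRestrict_eval x0 v P s
  have hqs : ∀ s, q.eval s = eval (fun j => x0 j + v j * s) Q :=
    fun s => lineRestrict_eval x0 v Q s
  have hx00 : (fun j => x0 j + v j * 0) = x0 := by funext j; simp
  have hx11 : (fun j => x0 j + v j * 1) = x1 := by funext j; simp [hv]
  have hg0 : g.eval 0 = 0 := by rw [hgs, hx00]; exact hP0
  have hg1 : g.eval 1 ≠ 0 := by rw [hgs, hx11]; exact hP1
  have hgne : g ≠ 0 := fun hc => hg1 (by rw [hc]; simp)
  have hq0 : q.eval 0 ≠ 0 := by
    rw [hqs, hx00]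
    intro hc
    apply h x0 hx0 Complex.I (by simp)
    rw [hP0, hc, mul_zero, add_zero]
  -- the local root function
  set φ : ℂ → ℂ := fun s => -(g.eval s) / q.eval s with hφdef
  have hφ0 : φ 0 = 0 := by simp [hφdef, hg0]
  have hga : AnalyticAt ℂ (fun s => g.eval s) 0 := by
    have := (analyticAt_id (𝕜 := ℂ) (z := (0:ℂ))).aeval_polynomial g
    simpa [Polynomial.coe_aeval_eq_eval] using this
  have hqa : AnalyticAt ℂ (fun s => q.eval s) 0 := by
    have := (analyticAt_id (𝕜 := ℂ) (z := (0:ℂ))).aeval_polynomial q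
    simpa [Polynomial.coe_aeval_eq_eval] using this
  have hφa : AnalyticAt ℂ φ 0 := (hga.neg).div hqa hq0
  -- the neighborhood where everything is fine
  have hD : ∀ᶠ s in nhds (0:ℂ), (∀ j, 0 < (x0 j + v j * s).im) ∧ q.eval s ≠ 0 := by
    have hq : ∀ᶠ s in nhds (0:ℂ), q.eval s ≠ 0 :=
      (q.continuous.continuousAt).eventually_ne hq0
    refine Filter.Eventually.and ?_ hq
    rw [Filter.eventually_all]
    intro j
    have hc : ContinuousAt (fun s : ℂ => (x0 j + v j * s).im) 0 := by
      apply Complex.continuous_im.continuousAt.comp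
      fun_prop
    have h0 : (0:ℝ) < (x0 j + v j * 0).im := by
      simpa using hx0 j
    exact (continuousAt_const (y := (0:ℝ))).eventually_lt hc h0
  -- open mapping dichotomy
  rcases hφa.eventually_constant_or_nhds_le_map_nhds_aux with hconst | hopen
  · -- φ constant 0 near 0 : g vanishes on a ball, so g = 0, contradiction
    rw [hφ0] at hconst
    have hg0' : ∀ᶠ s in nhds (0:ℂ), g.eval s = 0 := by
      filter_upwards [hconst, hD] with s hs hDs
      have : -(g.eval s) / q.eval s = 0 := hs
      rcases div_eq_zero_iff.mp this with h' | h'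
      · exact neg_eq_zero.mp h'
      · exact absurd h' hDs.2
    obtain ⟨ε, hε, hball⟩ := Metric.eventually_nhds_iff_ball.mp hg0'
    have : g = 0 := by
      apply Polynomial.eq_zero_of_infinite_isRoot
      exact (ball_infinite hε).mono (fun s hs => hball s hs)
    exact hgne this
  · -- φ is locally open at 0; find s with φ s ∈ H
    rw [hφ0] at hopen
    set U := {s : ℂ | (∀ j, 0 < (x0 j + v j * s).im) ∧ q.eval s ≠ 0} with hU
    have hUmem : U ∈ nhds (0:ℂ) := hD
    have himg : φ '' U ∈ nhds (0:ℂ) := by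
      apply hopen
      rw [Filter.mem_map]
      exact Filter.mem_of_superset hUmem (Set.subset_preimage_image φ U)
    obtain ⟨ε, hε, hball⟩ := Metric.mem_nhds_iff.mp himg
    have hw : (ε/2 : ℝ) * Complex.I ∈ Metric.ball (0:ℂ) ε := by
      simp only [Metric.mem_ball, Complex.dist_eq, sub_zero]
      rw [norm_mul, Complex.norm_I, mul_one, Complex.norm_real, Real.norm_eq_abs]
      rw [abs_of_pos (by linarith)]
      linarith
    obtain ⟨s, hsU, hφs⟩ := hball hw
    have hwim : (0:ℝ) < ((ε/2 : ℝ) * Complex.I).im := by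
      simp [Complex.mul_im]
      positivity
    have hq' : q.eval s ≠ 0 := hsU.2
    apply h (fun j => x0 j + v j * s) hsU.1 ((ε/2 : ℝ) * Complex.I) hwim
    rw [← hgs, ← hqs, ← hφs]
    show g.eval s + (-(g.eval s) / q.eval s) * q.eval s = 0
    field_simp
    ring
/-- If `w ∈ H` then `-w⁻¹ ∈ H`. -/
lemma neg_inv_im {w : ℂ} (hw : 0 < w.im) : 0 < (-w⁻¹).im := by
  have hw0 : w ≠ 0 := fun hc => by simp [hc] at hw
  rw [Complex.neg_im, Complex.inv_im, neg_div, neg_neg]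
  have : 0 < Complex.normSq w := Complex.normSq_pos.mpr hw0
  positivity

/-- Leading-coefficient extraction. -/
lemma leading_coeff_stable {σ : Type*} [Fintype σ] {P Q : MvPolynomial σ ℂ}
    (h : ∀ x : σ → ℂ, (∀ i, 0 < (x i).im) → ∀ w : ℂ, 0 < w.im →
      eval x P + w * eval x Q ≠ 0) :
    Q = 0 ∨ IsStable Q := by
  have key : ∀ x : σ → ℂ, (∀ i, 0 < (x i).im) → ∀ w : ℂ, 0 < w.im →
      eval x Q + w * eval x (-P) ≠ 0 := by
    intro x hx w hw hc
    have hw0 : w ≠ 0 := fun hcc => by simp [hcc] at hw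
    apply h x hx (-w⁻¹) (neg_inv_im hw)
    rw [map_neg] at hc
    have : eval x Q = w * eval x P := by linear_combination hc
    rw [this]
    field_simp
    ring
  exact constant_coeff_stable key

/-- Root location of the derivative of a nonvanishing quadratic. -/
lemma quad_mid_root {a e d w0 : ℂ} (hd : d ≠ 0)
    (h : ∀ w : ℂ, 0 < w.im → a + e * w + d * w ^ 2 ≠ 0) (hw0 : 0 < w0.im) :
    e + 2 * d * w0 ≠ 0 := by
  obtain ⟨s, hs⟩ := IsAlgClosed.exists_pow_nat_eq (k := ℂ) (e ^ 2 - 4 * a * d) zero_lt_two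
  have key : ∀ w : ℂ, 4 * d * (a + e * w + d * w ^ 2)
      = (2 * d * w - (-e + s)) * (2 * d * w - (-e - s)) := by
    intro w; linear_combination hs
  have hd2 : (2 * d : ℂ) ≠ 0 := by simpa using hd
  have h4 : (4 : ℂ) * d ≠ 0 := by simpa using hd
  have root : ∀ r : ℂ, (2 * d * r = -e + s ∨ 2 * d * r = -e - s) → r.im ≤ 0 := by
    intro r hr
    by_contra hcon
    push_neg at hcon
    apply h r hcon
    have hz : 4 * d * (a + e * r + d * r ^ 2) = 0 := by
      rw [key]
      rcases hr with hr | hr <;> rw [hr] <;> ring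
    exact (mul_eq_zero.mp hz).resolve_left h4
  set u : ℂ := (-e + s) / (2 * d) with hu
  set v : ℂ := (-e - s) / (2 * d) with hv
  have him1 : u.im ≤ 0 := by
    apply root; left; rw [hu]; field_simp
  have him2 : v.im ≤ 0 := by
    apply root; right; rw [hv]; field_simp
  intro hc
  have huv : u + v = -e / d := by
    rw [hu, hv]; field_simp; ring
  have h2w : 2 * w0 = u + v := by
    rw [huv]
    field_simp
    linear_combination hc
  have him : (2 * w0).im = u.im + v.im := by rw [h2w, Complex.add_im]
  have h2im : ((2 : ℂ) * w0).im = 2 * w0.im := by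
    simp [Complex.mul_im]
  linarith [hw0]

/-- The core contraction lemma: if `A + wB + uC + wuD` is nonvanishing on the upper
half-plane, then `B + C` is zero or stable. -/
lemma contraction_stable {σ : Type*} [Fintype σ] {A B C D : MvPolynomial σ ℂ}
    (h : ∀ x : σ → ℂ, (∀ i, 0 < (x i).im) → ∀ w u : ℂ, 0 < w.im → 0 < u.im →
      eval x A + w * eval x B + u * eval x C + w * u * eval x D ≠ 0) :
    B + C = 0 ∨ IsStable (B + C) := by
  by_cases hD : D = 0
  · -- affine case
    apply leading_coeff_stable (P := A) (Q := B + C)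
    intro x hx w hw hc
    apply h x hx w w hw hw
    rw [hD]
    simp only [map_zero, mul_zero, add_zero]
    rw [map_add] at hc
    linear_combination hc
  · -- D is stable
    have hQ' : ∀ x : σ → ℂ, (∀ i, 0 < (x i).im) → ∀ u : ℂ, 0 < u.im →
        eval x B + u * eval x D ≠ 0 := by
      -- first extract over σ ⊕ Unit
      set P' : MvPolynomial (σ ⊕ Unit) ℂ :=
        rename Sum.inl A + rename Sum.inl C * X (Sum.inr ()) with hP'
      set Q' : MvPolynomial (σ ⊕ Unit) ℂ :=
        rename Sum.inl B + rename Sum.inl D * X (Sum.inr ()) with hQ'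
      have hyp : ∀ y : σ ⊕ Unit → ℂ, (∀ i, 0 < (y i).im) → ∀ w : ℂ, 0 < w.im →
          eval y P' + w * eval y Q' ≠ 0 := by
        intro y hy w hw hc
        apply h (fun i => y (Sum.inl i)) (fun i => hy (Sum.inl i)) w (y (Sum.inr ()))
          hw (hy (Sum.inr ()))
        rw [hP', hQ'] at hc
        simp only [map_add, map_mul, eval_rename, eval_X] at hc
        rw [show (y ∘ Sum.inl) = fun i => y (Sum.inl i) from rfl] at hc
        linear_combination hc
      rcases leading_coeff_stable hyp with hz | hstab
      · -- Q' = 0 forces D = 0, contradiction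
        exfalso
        apply hD
        apply MvPolynomial.funext (q := 0)
        intro x
        have h0 : ∀ u : ℂ, eval x B + eval x D * u = 0 := by
          intro u
          have := congrArg (eval (Sum.elim x (fun _ => u))) hz
          rw [hQ'] at this
          simp only [map_add, map_mul, eval_rename, eval_X, map_zero] at this
          rw [show ((Sum.elim x fun _ => u) ∘ Sum.inl) = x from rfl] at this
          simpa using this
        have h1 := h0 0
        have h2 := h0 1
        rw [map_zero]
        linear_combination h2 - h1
      · intro x hx u hu hc
        apply hstab (Sum.elim x (fun _ => u)) ?_
        · rw [hQ']
          simp only [map_add, map_mul, eval_rename, eval_X]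
          rw [show ((Sum.elim x fun _ => u) ∘ Sum.inl) = x from rfl]
          simp only [Sum.elim_inr]
          linear_combination hc
        · intro i
          cases i with
          | inl i => exact hx i
          | inr i => exact hu
    have hDstab : IsStable D := by
      rcases leading_coeff_stable (P := B) (Q := D) hQ' with hz | hstab
      · exact absurd hz hD
      · exact hstab
    -- now the middle coefficient
    apply constant_coeff_stable (P := B + C) (Q := MvPolynomial.C 2 * D)
    intro x hx w hw hc
    have hd : eval x D ≠ 0 := hDstab x hx
    have hquad : ∀ w : ℂ, 0 < w.im →
        eval x A + (eval x B + eval x C) * w + eval x D * w ^ 2 ≠ 0 := by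
      intro w' hw' hc'
      apply h x hx w' w' hw' hw'
      linear_combination hc'
    have := quad_mid_root hd hquad hw
    apply this
    rw [map_add] at hc
    simp only [map_mul, eval_C] at hc
    linear_combination hc
/-- The squarefree exponent corresponding to a finite set of variables. -/
noncomputable def sqf {σ : Type*} (S : Finset σ) : σ →₀ ℕ := ∑ i ∈ S, Finsupp.single i 1

lemma sqf_apply {σ : Type*} [DecidableEq σ] (S : Finset σ) (j : σ) :
    sqf S j = if j ∈ S then 1 else 0 := by
  classical
  rw [sqf, Finsupp.finset_sum_apply]
  simp only [Finsupp.single_apply]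
  exact Finset.sum_ite_eq' S j (fun _ => 1)

lemma sqf_le_one {σ : Type*} (S : Finset σ) (j : σ) : sqf S j ≤ 1 := by
  classical
  rw [sqf_apply]
  split <;> simp

lemma sqf_support {σ : Type*} (S : Finset σ) : (sqf S).support = S := by
  classical
  ext j
  simp [Finsupp.mem_support_iff, sqf_apply]

lemma sqf_injective {σ : Type*} : Function.Injective (sqf (σ := σ)) := by
  intro S T h
  rw [← sqf_support S, ← sqf_support T, h]

lemma prodX_eq_monomial {σ : Type*} (S : Finset σ) :
    (∏ i ∈ S, X i : MvPolynomial σ ℂ) = monomial (sqf S) 1 := by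
  classical
  rw [← prod_X_pow_eq_monomial, sqf_support]
  apply Finset.prod_congr rfl
  intro i hi
  rw [sqf_apply, if_pos hi, pow_one]

/-- A multiaffine polynomial is the sum of its squarefree monomials. -/
lemma multiaffine_eq_sum {n : ℕ} (f : MvPolynomial (Fin n) ℂ)
    (hf : ∀ i, degreeOf i f ≤ 1) :
    f = ∑ S : Finset (Fin n), coeff (sqf S) f • ∏ i ∈ S, X i := by
  classical
  apply MvPolynomial.ext
  intro m
  rw [coeff_sum]
  simp only [coeff_smul, prodX_eq_monomial, coeff_monomial, smul_eq_mul]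
  by_cases hm : ∀ i, m i ≤ 1
  · have hmeq : m = sqf m.support := by
      ext j
      rw [sqf_apply]
      split
      · rename_i hj
        have h1 := Finsupp.mem_support_iff.mp hj
        have h2 := hm j
        omega
      · rename_i hj
        have := Finsupp.notMem_support_iff.mp hj
        omega
    have hterm : ∀ S : Finset (Fin n),
        coeff (sqf S) f * (if sqf S = m then 1 else 0)
          = if S = m.support then coeff m f else 0 := by
      intro S
      by_cases hS : S = m.support
      · subst hS; rw [if_pos hmeq.symm, if_pos rfl, mul_one, ← hmeq]
      · rw [if_neg, if_neg hS, mul_zero]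
        intro hc
        apply hS
        rw [← sqf_support S, hc, hmeq, sqf_support]
    rw [Finset.sum_congr rfl (fun S _ => hterm S),
      Finset.sum_ite_eq' Finset.univ m.support (fun _ => coeff m f),
      if_pos (Finset.mem_univ _)]
  · push_neg at hm
    obtain ⟨i, hi⟩ := hm
    have h1 : coeff m f = 0 := by
      rw [← MvPolynomial.notMem_support_iff]
      intro hmem
      have h2 : degreeOf i f < 2 := lt_of_le_of_lt (hf i) one_lt_two
      rw [degreeOf_lt_iff (by norm_num)] at h2
      have := h2 m hmem
      omega
    rw [h1]
    symm
    apply Finset.sum_eq_zero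
    intro S _
    have hne : sqf S ≠ m := by
      intro hc
      have := sqf_le_one S i
      rw [hc] at this
      omega
    rw [if_neg hne, mul_zero]
section Forward

variable {n : ℕ}

lemma fprod_mem (w : Fin n → ℂ) :
    (∏ i : Fin n, (X i + MvPolynomial.C (w i))) ∈ MultiaffineSubmodule n := by
  intro i
  refine le_trans (degreeOf_prod_le i _ _) ?_
  have hb : ∀ j ∈ Finset.univ,
      degreeOf i (X j + MvPolynomial.C (w j) : MvPolynomial (Fin n) ℂ)
        ≤ if i = j then 1 else 0 := by
    intro j _
    refine le_trans (degreeOf_add_le _ _ _) ?_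
    apply max_le
    · exact le_of_eq (degreeOf_X _ _)
    · simp [degreeOf_C]
  refine le_trans (Finset.sum_le_sum hb) ?_
  rw [Finset.sum_ite_eq]
  split <;> simp

lemma fprod_expand (w : Fin n → ℂ) :
    (∏ i : Fin n, (X i + MvPolynomial.C (w i)) : MvPolynomial (Fin n) ℂ)
      = ∑ S : Finset (Fin n), (∏ i ∈ Sᶜ, w i) • ∏ i ∈ S, X i := by
  rw [Finset.prod_add, Finset.powerset_univ]
  apply Finset.sum_congr rfl
  intro S _
  rw [smul_eq_C_mul, ← Finset.compl_eq_univ_sdiff, ← map_prod]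
  ring

lemma fprod_stable (w : Fin n → ℂ) (hw : ∀ i, 0 < (w i).im) :
    IsStable (∏ i : Fin n, (X i + MvPolynomial.C (w i)) : MvPolynomial (Fin n) ℂ) := by
  intro x hx
  rw [map_prod, Finset.prod_ne_zero_iff]
  intro i _
  simp only [map_add, eval_X, eval_C]
  intro hc
  have him : (x i + w i).im = 0 := by rw [hc]; simp
  rw [Complex.add_im] at him
  linarith [hx i, hw i]

lemma symbol_eval (T : MultiaffineSubmodule n →ₗ[ℂ] MultiaffineSubmodule n)
    (ζ : Fin n ⊕ Fin n → ℂ) :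
    eval ζ (∑ S : Finset (Fin n),
      rename Sum.inl
          ((T ⟨∏ i ∈ S, X i, prodX_mem_multiaffine S⟩ : MultiaffineSubmodule n) :
            MvPolynomial (Fin n) ℂ) *
        ∏ i ∈ Sᶜ, (X (Sum.inr i) : MvPolynomial (Fin n ⊕ Fin n) ℂ))
    = eval (fun i => ζ (Sum.inl i))
        ((T ⟨∏ i : Fin n, (X i + MvPolynomial.C (ζ (Sum.inr i))), fprod_mem _⟩ :
          MultiaffineSubmodule n) : MvPolynomial (Fin n) ℂ) := by
  set w : Fin n → ℂ := fun i => ζ (Sum.inr i) with hwdef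
  have hdecomp : (⟨∏ i : Fin n, (X i + MvPolynomial.C (w i)), fprod_mem _⟩ :
      MultiaffineSubmodule n)
      = ∑ S : Finset (Fin n),
          (∏ i ∈ Sᶜ, w i) • ⟨∏ i ∈ S, X i, prodX_mem_multiaffine S⟩ := by
    apply Subtype.ext
    simp only [AddSubmonoidClass.coe_finset_sum, SetLike.val_smul]
    exact fprod_expand w
  rw [hdecomp, map_sum, map_sum, AddSubmonoidClass.coe_finset_sum, map_sum]
  apply Finset.sum_congr rfl
  intro S _
  rw [map_mul, eval_rename, map_prod]
  simp only [eval_X, map_smul, SetLike.val_smul, smul_eq_C_mul, map_mul, eval_C]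
  rw [mul_comm]
  rfl

lemma lower_factor (a ζ : ℂ) (ha : 0 < a.im) (hζ : 0 < ζ.im) :
    min a.im 1 / (2 + 2 * Complex.abs a) * (1 + Complex.abs ζ) ≤ Complex.abs (ζ + a) := by
  have habs : 0 ≤ Complex.abs a := Complex.abs.nonneg a
  have hZ : 0 ≤ Complex.abs ζ := Complex.abs.nonneg ζ
  have hmin : 0 < min a.im 1 := lt_min ha one_pos
  have hmin1 : min a.im 1 ≤ 1 := min_le_right _ _
  have hmina : min a.im 1 ≤ a.im := min_le_left _ _
  by_cases hcase : Complex.abs ζ ≤ 1 + 2 * Complex.abs a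
  · have h1 : a.im ≤ (ζ + a).im := by rw [Complex.add_im]; linarith
    have h2 : (ζ + a).im ≤ Complex.abs (ζ + a) :=
      le_trans (le_abs_self _) (Complex.abs_im_le_norm _)
    have h3 : min a.im 1 / (2 + 2 * Complex.abs a) * (1 + Complex.abs ζ) ≤ min a.im 1 := by
      rw [div_mul_eq_mul_div, div_le_iff₀ (by positivity)]
      nlinarith
    linarith
  · push_neg at hcase
    have h0 : Complex.abs ζ ≤ Complex.abs (ζ + a) + Complex.abs a := by
      calc Complex.abs ζ = Complex.abs ((ζ + a) + (-a)) := by congr 1; ring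
        _ ≤ Complex.abs (ζ + a) + Complex.abs (-a) := Complex.abs.add_le _ _
        _ = Complex.abs (ζ + a) + Complex.abs a := by rw [Complex.abs.map_neg]
    have hchalf : min a.im 1 / (2 + 2 * Complex.abs a) ≤ 1 / 2 := by
      rw [div_le_div_iff₀ (by positivity) (by norm_num)]
      nlinarith
    nlinarith [hchalf, h0, hcase, hZ]

lemma upper_multiaffine (g : MvPolynomial (Fin n) ℂ) (hg : g ∈ MultiaffineSubmodule n)
    (x : Fin n → ℂ) :
    Complex.abs (eval x g) ≤ (∑ m ∈ g.support, Complex.abs (coeff m g))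
      * ∏ i : Fin n, (1 + Complex.abs (x i)) := by
  rw [eval_eq]
  refine le_trans (Complex.abs.sum_le _ _) ?_
  rw [Finset.sum_mul]
  apply Finset.sum_le_sum
  intro d hd
  rw [map_mul]
  apply mul_le_mul_of_nonneg_left ?_ (Complex.abs.nonneg _)
  rw [map_prod]
  have hstep1 : ∀ i ∈ d.support, Complex.abs (x i ^ d i) ≤ 1 + Complex.abs (x i) := by
    intro i hi
    have hd1 : d i ≤ 1 := by
      have h2 := (degreeOf_le_iff.mp (hg i)) d hd
      exact h2
    have hne : d i ≠ 0 := Finsupp.mem_support_iff.mp hi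
    have : d i = 1 := by omega
    rw [this, pow_one]
    linarith [Complex.abs.nonneg (x i)]
  calc ∏ i ∈ d.support, Complex.abs (x i ^ d i)
      ≤ ∏ i ∈ d.support, (1 + Complex.abs (x i)) :=
        Finset.prod_le_prod (fun i _ => Complex.abs.nonneg _) hstep1
    _ ≤ ∏ i : Fin n, (1 + Complex.abs (x i)) := by
        rw [← Finset.prod_sdiff (Finset.subset_univ d.support)]
        have h1 : (1:ℝ) ≤ ∏ i ∈ Finset.univ \ d.support, (1 + Complex.abs (x i)) := by
          have := Finset.prod_le_prod (s := Finset.univ \ d.support)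
            (f := fun _ => (1:ℝ)) (g := fun i => 1 + Complex.abs (x i))
            (by intro i _; exact zero_le_one)
            (by intro i _; show (1:ℝ) ≤ 1 + Complex.abs (x i); linarith [Complex.abs.nonneg (x i)])
          simpa using this
        have h2 : 0 ≤ ∏ i ∈ d.support, (1 + Complex.abs (x i)) :=
          Finset.prod_nonneg fun i _ => by linarith [Complex.abs.nonneg (x i)]
        exact le_mul_of_one_le_left h2 h1

lemma perturb_stable (w : Fin n → ℂ) (hw : ∀ i, 0 < (w i).im)
    (g : MvPolynomial (Fin n) ℂ) (hg : g ∈ MultiaffineSubmodule n) :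
    ∃ ε : ℂ, ε ≠ 0 ∧
      IsStable ((∏ i : Fin n, (X i + MvPolynomial.C (w i))) + ε • g) := by
  classical
  set Cg := ∑ m ∈ g.support, Complex.abs (coeff m g) with hCgdef
  have hCg0 : 0 ≤ Cg := Finset.sum_nonneg fun _ _ => Complex.abs.nonneg _
  set c : ℝ := ∏ i : Fin n, (min (w i).im 1 / (2 + 2 * Complex.abs (w i))) with hcdef
  have hcpos : 0 < c := by
    rw [hcdef]
    apply Finset.prod_pos
    intro i _
    have h1 : 0 < min (w i).im 1 := lt_min (hw i) one_pos
    have h2 : 0 ≤ Complex.abs (w i) := Complex.abs.nonneg _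
    positivity
  set ε : ℝ := c / (2 * (Cg + 1)) with hεdef
  have hεpos : 0 < ε := by rw [hεdef]; positivity
  refine ⟨(ε : ℂ), by simpa using hεpos.ne', ?_⟩
  intro x hx
  set Px : ℝ := ∏ i : Fin n, (1 + Complex.abs (x i)) with hPxdef
  have hPxpos : 0 < Px := by
    rw [hPxdef]
    apply Finset.prod_pos
    intro i _
    linarith [Complex.abs.nonneg (x i)]
  have hlow : c * Px ≤ Complex.abs (eval x (∏ i : Fin n, (X i + MvPolynomial.C (w i)))) := by
    rw [map_prod]
    rw [show Complex.abs (∏ i : Fin n, eval x (X i + MvPolynomial.C (w i)))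
        = ∏ i : Fin n, Complex.abs (eval x (X i + MvPolynomial.C (w i))) from
        map_prod Complex.abs _ _]
    rw [hcdef, hPxdef, ← Finset.prod_mul_distrib]
    apply Finset.prod_le_prod
    · intro i _
      have h1 : 0 < min (w i).im 1 := lt_min (hw i) one_pos
      have h2 : 0 ≤ Complex.abs (w i) := Complex.abs.nonneg _
      have h3 : 0 ≤ 1 + Complex.abs (x i) := by linarith [Complex.abs.nonneg (x i)]
      positivity
    · intro i _
      simp only [map_add, eval_X, eval_C]
      exact lower_factor (w i) (x i) (hw i) (hx i)
  have hup : Complex.abs (eval x g) ≤ Cg * Px := upper_multiaffine g hg x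
  intro hc
  rw [map_add] at hc
  have hsm : eval x ((ε : ℂ) • g) = (ε : ℂ) * eval x g := by
    rw [smul_eq_C_mul, map_mul, eval_C]
  rw [hsm] at hc
  have habs : Complex.abs (eval x (∏ i : Fin n, (X i + MvPolynomial.C (w i))))
      = ε * Complex.abs (eval x g) := by
    have h1 : eval x (∏ i : Fin n, (X i + MvPolynomial.C (w i)))
        = -((ε:ℂ) * eval x g) := by linear_combination hc
    rw [h1, Complex.abs.map_neg, map_mul, Complex.abs_ofReal, abs_of_pos hεpos]
  have hcontr : c * Px ≤ ε * (Cg * Px) := by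
    calc c * Px ≤ Complex.abs (eval x (∏ i : Fin n, (X i + MvPolynomial.C (w i)))) := hlow
      _ = ε * Complex.abs (eval x g) := habs
      _ ≤ ε * (Cg * Px) := by
          apply mul_le_mul_of_nonneg_left hup hεpos.le
  have harith : ∀ c' Cg' Px' : ℝ, 0 < c' → 0 ≤ Cg' → 0 < Px' →
      ¬ (c' * Px' ≤ c' / (2 * (Cg' + 1)) * (Cg' * Px')) := by
    intro c' Cg' Px' hc' hCg' hPx' hcontr'
    have hden : (0:ℝ) < 2 * (Cg' + 1) := by linarith
    rw [div_mul_eq_mul_div, le_div_iff₀ hden] at hcontr'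
    nlinarith [mul_pos hc' hPx', hCg']
  exact harith c Cg Px hcpos hCg0 hPxpos hcontr

end Forward
lemma forward_direction (n : ℕ)
    (T : MultiaffineSubmodule n →ₗ[ℂ] MultiaffineSubmodule n)
    (hT : 2 ≤ Module.finrank ℂ (LinearMap.range T))
    (hpres : ∀ f : MultiaffineSubmodule n, IsStable (f : MvPolynomial (Fin n) ℂ) →
      ((T f : MvPolynomial (Fin n) ℂ) = 0 ∨ IsStable (T f : MvPolynomial (Fin n) ℂ))) :
    IsStable (∑ S : Finset (Fin n),
      rename Sum.inl
          ((T ⟨∏ i ∈ S, X i, prodX_mem_multiaffine S⟩ : MultiaffineSubmodule n) :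
            MvPolynomial (Fin n) ℂ) *
        ∏ i ∈ Sᶜ, (X (Sum.inr i) : MvPolynomial (Fin n ⊕ Fin n) ℂ)) := by
  intro ζ hζ
  rw [symbol_eval T ζ]
  set w : Fin n → ℂ := fun i => ζ (Sum.inr i) with hwdef
  have hw : ∀ i, 0 < (w i).im := fun i => hζ (Sum.inr i)
  have hz : ∀ i, 0 < ((fun i => ζ (Sum.inl i)) i).im := fun i => hζ (Sum.inl i)
  rcases hpres ⟨_, fprod_mem w⟩ (fprod_stable w hw) with h0 | hstab
  · -- degenerate case: contradiction with the rank hypothesis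
    exfalso
    have hTz : T ⟨_, fprod_mem w⟩ = 0 := by
      apply Subtype.ext
      exact h0
    have hall : ∀ g : MultiaffineSubmodule n,
        (T g : MvPolynomial (Fin n) ℂ) = 0 ∨ IsStable (T g : MvPolynomial (Fin n) ℂ) := by
      intro g
      obtain ⟨ε, hε, hstab'⟩ := perturb_stable w hw g.1 g.2
      have hmem : (∏ i : Fin n, (X i + MvPolynomial.C (w i)))
          + ε • (g : MvPolynomial (Fin n) ℂ) ∈ MultiaffineSubmodule n :=
        Submodule.add_mem _ (fprod_mem w) (Submodule.smul_mem _ _ g.2)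
      have hsplit : (⟨_, hmem⟩ : MultiaffineSubmodule n)
          = ⟨_, fprod_mem w⟩ + ε • g := by
        apply Subtype.ext
        simp only [Submodule.coe_add, SetLike.val_smul]
      have hres := hpres ⟨_, hmem⟩ hstab'
      rw [hsplit, map_add, map_smul, hTz, zero_add] at hres
      rcases hres with h | h
      · left
        have hz' : ε • (T g : MvPolynomial (Fin n) ℂ) = 0 := by
          rw [← h]; rfl
        rcases smul_eq_zero.mp hz' with h' | h'
        · exact absurd h' hε
        · exact h'
      · right
        intro x hx hc
        apply h x hx
        rw [show ((ε • T g : MultiaffineSubmodule n) : MvPolynomial (Fin n) ℂ)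
            = ε • (T g : MvPolynomial (Fin n) ℂ) from rfl]
        rw [smul_eq_C_mul, map_mul, eval_C, hc, mul_zero]
    -- extract two linearly independent elements of the range
    have hnontriv : Nontrivial (LinearMap.range T) := by
      by_contra hcon
      have hsub : Subsingleton (LinearMap.range T) := not_nontrivial_iff_subsingleton.mp hcon
      have := Module.finrank_zero_of_subsingleton (R := ℂ) (M := LinearMap.range T)
      omega
    obtain ⟨x, hxne⟩ := exists_ne (0 : LinearMap.range T)
    have hrank : 1 < Module.finrank ℂ (LinearMap.range T) := by omega
    obtain ⟨y, hxy⟩ := exists_linearIndependent_pair_of_one_lt_finrank (R := ℂ) (M := LinearMap.range T) hrank hxne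
    obtain ⟨g1, hg1⟩ := x.2
    obtain ⟨g2, hg2⟩ := y.2
    have hyne : (y : MultiaffineSubmodule n) ≠ 0 := by
      have hy0 : y ≠ 0 := by
        have := hxy.ne_zero 1
        simpa using this
      exact fun hc => hy0 (Subtype.ext hc)
    have hstab_all : ∀ t : ℂ,
        IsStable (((x : MultiaffineSubmodule n) : MvPolynomial (Fin n) ℂ)
          + t • ((y : MultiaffineSubmodule n) : MvPolynomial (Fin n) ℂ)) := by
      intro t
      have heq : ((T (g1 + t • g2) : MultiaffineSubmodule n) : MvPolynomial (Fin n) ℂ)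
          = ((x : MultiaffineSubmodule n) : MvPolynomial (Fin n) ℂ)
          + t • ((y : MultiaffineSubmodule n) : MvPolynomial (Fin n) ℂ) := by
        rw [map_add, map_smul, hg1, hg2]
        rfl
      rcases hall (g1 + t • g2) with h | h
      · exfalso
        rw [heq] at h
        have hxy0 : (1:ℂ) • x + t • y = 0 := by
          apply Subtype.ext
          apply Subtype.ext
          push_cast
          rw [one_smul]
          exact_mod_cast h
        have := (LinearIndependent.pair_iff.mp hxy 1 t hxy0).1
        exact one_ne_zero this
      · rw [heq] at h
        exact h
    -- now y evaluates to zero on the whole upper half-space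
    have hyzero : ((y : MultiaffineSubmodule n) : MvPolynomial (Fin n) ℂ) = 0 := by
      by_contra hyne'
      obtain ⟨z, hz', hzy⟩ := exists_upper_ne_zero hyne'
      set p := eval z ((x : MultiaffineSubmodule n) : MvPolynomial (Fin n) ℂ) with hp
      set q := eval z ((y : MultiaffineSubmodule n) : MvPolynomial (Fin n) ℂ) with hq
      apply hstab_all (-p/q) z hz'
      rw [map_add, smul_eq_C_mul, map_mul, eval_C, ← hp, ← hq]
      field_simp
      ring
    exact hyne (by
      apply Subtype.ext
      exact hyzero)
  · exact hstab _ hz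
section Backward

variable {n : ℕ}

/-- Finset helpers -/
lemma sdiff_insert_mem {α : Type*} [DecidableEq α] {A K : Finset α} {i : α}
    (hiA : i ∈ A) (hiK : i ∉ K) : A \ K = insert i (A \ insert i K) := by
  ext j
  simp only [Finset.mem_sdiff, Finset.mem_insert]
  constructor
  · rintro ⟨hj, hjK⟩
    by_cases hji : j = i
    · exact Or.inl hji
    · exact Or.inr ⟨hj, by simp [hji, hjK]⟩
  · rintro (rfl | ⟨hj, hjK⟩)
    · exact ⟨hiA, hiK⟩
    · exact ⟨hj, fun hc => hjK (Or.inr hc)⟩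

lemma sdiff_insert_not_mem {α : Type*} [DecidableEq α] {A K : Finset α} {i : α}
    (hiA : i ∉ A) : A \ insert i K = A \ K := by
  ext j
  simp only [Finset.mem_sdiff, Finset.mem_insert]
  constructor
  · rintro ⟨hj, hjK⟩
    exact ⟨hj, fun hc => hjK (Or.inr hc)⟩
  · rintro ⟨hj, hjK⟩
    refine ⟨hj, ?_⟩
    rintro (rfl | hc)
    · exact hiA hj
    · exact hjK hc

lemma inter_insert_cond {S Tt K : Finset (Fin n)} {i : Fin n} :
    (S ∩ insert i K = Tt ∩ insert i K) ↔ (S ∩ K = Tt ∩ K ∧ (i ∈ S ↔ i ∈ Tt)) := by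
  simp only [Finset.ext_iff, Finset.mem_inter, Finset.mem_insert]
  constructor
  · intro h
    refine ⟨fun j => ?_, ?_⟩
    · have := h j
      constructor
      · rintro ⟨hjS, hjK⟩
        exact ⟨(this.mp ⟨hjS, Or.inr hjK⟩).1, hjK⟩
      · rintro ⟨hjT, hjK⟩
        exact ⟨(this.mpr ⟨hjT, Or.inr hjK⟩).1, hjK⟩
    · have := h i
      constructor
      · intro hiS
        exact (this.mp ⟨hiS, Or.inl rfl⟩).1
      · intro hiT
        exact (this.mpr ⟨hiT, Or.inl rfl⟩).1
  · rintro ⟨h1, h2⟩ j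
    constructor
    · rintro ⟨hjS, (rfl | hjK)⟩
      · exact ⟨h2.mp hjS, Or.inl rfl⟩
      · exact ⟨((h1 j).mp ⟨hjS, hjK⟩).1, Or.inr hjK⟩
    · rintro ⟨hjT, (rfl | hjK)⟩
      · exact ⟨h2.mpr hjT, Or.inl rfl⟩
      · exact ⟨((h1 j).mpr ⟨hjT, hjK⟩).1, Or.inr hjK⟩

/-- `T` applied to a squarefree monomial. -/
noncomputable def tauS (T : MultiaffineSubmodule n →ₗ[ℂ] MultiaffineSubmodule n)
    (S : Finset (Fin n)) : MvPolynomial (Fin n) ℂ :=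
  ((T ⟨∏ i ∈ S, X i, prodX_mem_multiaffine S⟩ : MultiaffineSubmodule n) :
    MvPolynomial (Fin n) ℂ)

/-- A single term of the contraction polynomial. -/
noncomputable def bigTerm (T : MultiaffineSubmodule n →ₗ[ℂ] MultiaffineSubmodule n)
    (S Tt K : Finset (Fin n)) : MvPolynomial ((Fin n ⊕ Fin n) ⊕ Fin n) ℂ :=
  rename (Sum.inl ∘ Sum.inl) (tauS T S)
    * (∏ j ∈ Sᶜ \ K, X (Sum.inl (Sum.inr j)))
    * (∏ j ∈ Tt \ K, X (Sum.inr j))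

/-- The partially contracted polynomials. -/
noncomputable def PsiIf (T : MultiaffineSubmodule n →ₗ[ℂ] MultiaffineSubmodule n)
    (f : MvPolynomial (Fin n) ℂ)
    (cond : Finset (Fin n) → Finset (Fin n) → Prop) (K : Finset (Fin n)) :
    MvPolynomial ((Fin n ⊕ Fin n) ⊕ Fin n) ℂ :=
  ∑ S : Finset (Fin n), ∑ Tt : Finset (Fin n),
    if cond S Tt then MvPolynomial.C (coeff (sqf Tt) f) * bigTerm T S Tt K else 0

lemma eval_bigTerm (T : MultiaffineSubmodule n →ₗ[ℂ] MultiaffineSubmodule n)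
    (S Tt K : Finset (Fin n)) (y : (Fin n ⊕ Fin n) ⊕ Fin n → ℂ) :
    eval y (bigTerm T S Tt K) = eval (fun i => y (Sum.inl (Sum.inl i))) (tauS T S)
      * (∏ j ∈ Sᶜ \ K, y (Sum.inl (Sum.inr j)))
      * (∏ j ∈ Tt \ K, y (Sum.inr j)) := by
  rw [bigTerm, map_mul, map_mul, eval_rename, map_prod, map_prod]
  simp only [eval_X]
  rfl

lemma eval_PsiIf (T : MultiaffineSubmodule n →ₗ[ℂ] MultiaffineSubmodule n)
    (f : MvPolynomial (Fin n) ℂ)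
    (cond : Finset (Fin n) → Finset (Fin n) → Prop) (K : Finset (Fin n))
    (y : (Fin n ⊕ Fin n) ⊕ Fin n → ℂ) :
    eval y (PsiIf T f cond K) = ∑ S : Finset (Fin n), ∑ Tt : Finset (Fin n),
      if cond S Tt then coeff (sqf Tt) f * eval y (bigTerm T S Tt K) else 0 := by
  rw [PsiIf, map_sum]
  refine Finset.sum_congr rfl fun S _ => ?_
  rw [map_sum]
  refine Finset.sum_congr rfl fun Tt _ => ?_
  split_ifs
  · rw [map_mul, eval_C]
  · rw [map_zero]

/-- Evaluation of a partially contracted polynomial does not depend on the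
coordinates `w_i, u_i` once `i` has been contracted. -/
lemma eval_PsiIf_update (T : MultiaffineSubmodule n →ₗ[ℂ] MultiaffineSubmodule n)
    (f : MvPolynomial (Fin n) ℂ)
    (cond : Finset (Fin n) → Finset (Fin n) → Prop) (K : Finset (Fin n))
    {i : Fin n} (hiK : i ∈ K) (y : (Fin n ⊕ Fin n) ⊕ Fin n → ℂ) (w u : ℂ) :
    eval (Function.update (Function.update y (Sum.inl (Sum.inr i)) w) (Sum.inr i) u)
        (PsiIf T f cond K)
      = eval y (PsiIf T f cond K) := by
  set y' := Function.update (Function.update y (Sum.inl (Sum.inr i)) w) (Sum.inr i) u with hy'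
  rw [eval_PsiIf, eval_PsiIf]
  refine Finset.sum_congr rfl fun S _ => Finset.sum_congr rfl fun Tt _ => ?_
  split_ifs with hcond
  · congr 1
    rw [eval_bigTerm, eval_bigTerm]
    have h1 : (fun k => y' (Sum.inl (Sum.inl k))) = (fun k => y (Sum.inl (Sum.inl k))) := by
      funext k
      rw [hy', Function.update_of_ne (by simp), Function.update_of_ne (by simp)]
    have h2 : ∏ j ∈ Sᶜ \ K, y' (Sum.inl (Sum.inr j))
        = ∏ j ∈ Sᶜ \ K, y (Sum.inl (Sum.inr j)) := by
      refine Finset.prod_congr rfl fun j hj => ?_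
      have hji : j ≠ i := fun hc => ((Finset.mem_sdiff.mp hj).2) (hc ▸ hiK)
      rw [hy', Function.update_of_ne (by simp), Function.update_of_ne (by simp [hji])]
    have h3 : ∏ j ∈ Tt \ K, y' (Sum.inr j) = ∏ j ∈ Tt \ K, y (Sum.inr j) := by
      refine Finset.prod_congr rfl fun j hj => ?_
      have hji : j ≠ i := fun hc => ((Finset.mem_sdiff.mp hj).2) (hc ▸ hiK)
      rw [hy', Function.update_of_ne (by simp [hji]), Function.update_of_ne (by simp)]
    rw [h1, h2, h3]
  · rfl

/-- The decomposition of `Ψ_K` with respect to the variables `w_i, u_i`. -/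
lemma Psi_decomp (T : MultiaffineSubmodule n →ₗ[ℂ] MultiaffineSubmodule n)
    (f : MvPolynomial (Fin n) ℂ) {K : Finset (Fin n)} {i : Fin n} (hi : i ∉ K) :
    PsiIf T f (fun S Tt => S ∩ K = Tt ∩ K) K
      = PsiIf T f (fun S Tt => S ∩ K = Tt ∩ K ∧ i ∈ S ∧ i ∉ Tt) (insert i K)
      + X (Sum.inl (Sum.inr i)) *
          PsiIf T f (fun S Tt => S ∩ K = Tt ∩ K ∧ i ∉ S ∧ i ∉ Tt) (insert i K)
      + X (Sum.inr i) *
          PsiIf T f (fun S Tt => S ∩ K = Tt ∩ K ∧ i ∈ S ∧ i ∈ Tt) (insert i K)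
      + X (Sum.inl (Sum.inr i)) * X (Sum.inr i) *
          PsiIf T f (fun S Tt => S ∩ K = Tt ∩ K ∧ i ∉ S ∧ i ∈ Tt) (insert i K) := by
  rw [PsiIf, PsiIf, PsiIf, PsiIf, PsiIf]
  simp only [Finset.mul_sum]
  simp only [← Finset.sum_add_distrib]
  refine Finset.sum_congr rfl fun S _ => Finset.sum_congr rfl fun Tt _ => ?_
  by_cases hcond : S ∩ K = Tt ∩ K
  · by_cases hS : i ∈ S <;> by_cases hT : i ∈ Tt
    · -- i ∈ S, i ∈ Tt : only the third summand
      rw [if_pos hcond, if_neg (by simp [hS, hT]), if_neg (by simp [hS, hT]),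
        if_pos ⟨hcond, hS, hT⟩, if_neg (by simp [hS, hT])]
      have hW : Sᶜ \ K = Sᶜ \ insert i K := (sdiff_insert_not_mem (by simp [hS])).symm
      have hU : Tt \ K = insert i (Tt \ insert i K) := sdiff_insert_mem hT hi
      rw [bigTerm, bigTerm, hW, hU, Finset.prod_insert (by simp)]
      ring
    · -- i ∈ S, i ∉ Tt : only the first summand
      rw [if_pos hcond, if_pos ⟨hcond, hS, hT⟩, if_neg (by simp [hS, hT]),
        if_neg (by simp [hS, hT]), if_neg (by simp [hS, hT])]
      have hW : Sᶜ \ K = Sᶜ \ insert i K := (sdiff_insert_not_mem (by simp [hS])).symm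
      have hU : Tt \ K = Tt \ insert i K := (sdiff_insert_not_mem hT).symm
      rw [bigTerm, bigTerm, hW, hU]
      ring
    · -- i ∉ S, i ∈ Tt : only the fourth summand
      rw [if_pos hcond, if_neg (by simp [hS, hT]), if_neg (by simp [hS, hT]),
        if_neg (by simp [hS, hT]), if_pos ⟨hcond, hS, hT⟩]
      have hW : Sᶜ \ K = insert i (Sᶜ \ insert i K) := sdiff_insert_mem (by simp [hS]) hi
      have hU : Tt \ K = insert i (Tt \ insert i K) := sdiff_insert_mem hT hi
      rw [bigTerm, bigTerm, hW, hU, Finset.prod_insert (by simp), Finset.prod_insert (by simp)]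
      ring
    · -- i ∉ S, i ∉ Tt : only the second summand
      rw [if_pos hcond, if_neg (by simp [hS, hT]), if_pos ⟨hcond, hS, hT⟩,
        if_neg (by simp [hS, hT]), if_neg (by simp [hS, hT])]
      have hW : Sᶜ \ K = insert i (Sᶜ \ insert i K) := sdiff_insert_mem (by simp [hS]) hi
      have hU : Tt \ K = Tt \ insert i K := (sdiff_insert_not_mem hT).symm
      rw [bigTerm, bigTerm, hW, hU, Finset.prod_insert (by simp)]
      ring
  · rw [if_neg hcond, if_neg (by simp [hcond]), if_neg (by simp [hcond]),
      if_neg (by simp [hcond]), if_neg (by simp [hcond])]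
    simp

/-- `Ψ_{K ∪ {i}}` is the sum of the two matching groups. -/
lemma Psi_insert (T : MultiaffineSubmodule n →ₗ[ℂ] MultiaffineSubmodule n)
    (f : MvPolynomial (Fin n) ℂ) {K : Finset (Fin n)} {i : Fin n} :
    PsiIf T f (fun S Tt => S ∩ insert i K = Tt ∩ insert i K) (insert i K)
      = PsiIf T f (fun S Tt => S ∩ K = Tt ∩ K ∧ i ∉ S ∧ i ∉ Tt) (insert i K)
      + PsiIf T f (fun S Tt => S ∩ K = Tt ∩ K ∧ i ∈ S ∧ i ∈ Tt) (insert i K) := by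
  rw [PsiIf, PsiIf, PsiIf]
  simp only [← Finset.sum_add_distrib]
  refine Finset.sum_congr rfl fun S _ => Finset.sum_congr rfl fun Tt _ => ?_
  by_cases hcond : S ∩ K = Tt ∩ K
  · by_cases hS : i ∈ S <;> by_cases hT : i ∈ Tt
    · rw [if_pos (inter_insert_cond.mpr ⟨hcond, by tauto⟩), if_neg (by simp [hS, hT]),
        if_pos ⟨hcond, hS, hT⟩, zero_add]
    · rw [if_neg (fun hc => by have := (inter_insert_cond.mp hc).2; tauto),
        if_neg (by simp [hS, hT]), if_neg (by simp [hS, hT]), add_zero]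
    · rw [if_neg (fun hc => by have := (inter_insert_cond.mp hc).2; tauto),
        if_neg (by simp [hS, hT]), if_neg (by simp [hS, hT]), add_zero]
    · rw [if_pos (inter_insert_cond.mpr ⟨hcond, by tauto⟩), if_pos ⟨hcond, hS, hT⟩,
        if_neg (by simp [hS, hT]), add_zero]
  · rw [if_neg (fun hc => hcond (inter_insert_cond.mp hc).1),
      if_neg (by simp [hcond]), if_neg (by simp [hcond]), add_zero]

end Backward
section Backward2

variable {n : ℕ}

lemma eval_Psi_decomp (T : MultiaffineSubmodule n →ₗ[ℂ] MultiaffineSubmodule n)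
    (f : MvPolynomial (Fin n) ℂ) {K : Finset (Fin n)} {i : Fin n} (hi : i ∉ K)
    (y : (Fin n ⊕ Fin n) ⊕ Fin n → ℂ) (w u : ℂ) :
    eval (Function.update (Function.update y (Sum.inl (Sum.inr i)) w) (Sum.inr i) u)
        (PsiIf T f (fun S Tt => S ∩ K = Tt ∩ K) K)
      = eval y (PsiIf T f (fun S Tt => S ∩ K = Tt ∩ K ∧ i ∈ S ∧ i ∉ Tt) (insert i K))
      + w * eval y (PsiIf T f (fun S Tt => S ∩ K = Tt ∩ K ∧ i ∉ S ∧ i ∉ Tt) (insert i K))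
      + u * eval y (PsiIf T f (fun S Tt => S ∩ K = Tt ∩ K ∧ i ∈ S ∧ i ∈ Tt) (insert i K))
      + w * u * eval y
          (PsiIf T f (fun S Tt => S ∩ K = Tt ∩ K ∧ i ∉ S ∧ i ∈ Tt) (insert i K)) := by
  have hiK' : i ∈ insert i K := Finset.mem_insert_self i K
  rw [Psi_decomp T f hi]
  simp only [map_add, map_mul, eval_X]
  rw [eval_PsiIf_update T f _ _ hiK', eval_PsiIf_update T f _ _ hiK',
    eval_PsiIf_update T f _ _ hiK', eval_PsiIf_update T f _ _ hiK']
  rw [Function.update_self]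
  rw [Function.update_of_ne (by simp), Function.update_self]

lemma Psi_step (T : MultiaffineSubmodule n →ₗ[ℂ] MultiaffineSubmodule n)
    (f : MvPolynomial (Fin n) ℂ) {K : Finset (Fin n)} {i : Fin n} (hi : i ∉ K)
    (hprev : PsiIf T f (fun S Tt => S ∩ K = Tt ∩ K) K = 0
      ∨ IsStable (PsiIf T f (fun S Tt => S ∩ K = Tt ∩ K) K)) :
    PsiIf T f (fun S Tt => S ∩ insert i K = Tt ∩ insert i K) (insert i K) = 0
      ∨ IsStable (PsiIf T f (fun S Tt => S ∩ insert i K = Tt ∩ insert i K) (insert i K)) := by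
  rcases hprev with h0 | hst
  · left
    rw [Psi_insert]
    apply MvPolynomial.funext (q := 0)
    intro y
    have e : ∀ w u : ℂ, (0:ℂ)
        = eval y (PsiIf T f (fun S Tt => S ∩ K = Tt ∩ K ∧ i ∈ S ∧ i ∉ Tt) (insert i K))
        + w * eval y (PsiIf T f (fun S Tt => S ∩ K = Tt ∩ K ∧ i ∉ S ∧ i ∉ Tt) (insert i K))
        + u * eval y (PsiIf T f (fun S Tt => S ∩ K = Tt ∩ K ∧ i ∈ S ∧ i ∈ Tt) (insert i K))
        + w * u * eval y
            (PsiIf T f (fun S Tt => S ∩ K = Tt ∩ K ∧ i ∉ S ∧ i ∈ Tt) (insert i K)) := by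
      intro w u
      rw [← eval_Psi_decomp T f hi y w u, h0, map_zero]
    have e00 := e 0 0
    have e10 := e 1 0
    have e01 := e 0 1
    rw [map_add, map_zero]
    linear_combination (e00 - e10) + (e00 - e01)
  · have hyp : ∀ x : (Fin n ⊕ Fin n) ⊕ Fin n → ℂ, (∀ k, 0 < (x k).im) →
        ∀ w u : ℂ, 0 < w.im → 0 < u.im →
        eval x (PsiIf T f (fun S Tt => S ∩ K = Tt ∩ K ∧ i ∈ S ∧ i ∉ Tt) (insert i K))
        + w * eval x (PsiIf T f (fun S Tt => S ∩ K = Tt ∩ K ∧ i ∉ S ∧ i ∉ Tt) (insert i K))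
        + u * eval x (PsiIf T f (fun S Tt => S ∩ K = Tt ∩ K ∧ i ∈ S ∧ i ∈ Tt) (insert i K))
        + w * u * eval x
            (PsiIf T f (fun S Tt => S ∩ K = Tt ∩ K ∧ i ∉ S ∧ i ∈ Tt) (insert i K)) ≠ 0 := by
      intro x hx w u hw hu
      have hupd : ∀ k, 0 < ((Function.update
          (Function.update x (Sum.inl (Sum.inr i)) w) (Sum.inr i) u) k).im := by
        intro k
        rcases eq_or_ne k (Sum.inr i) with rfl | hk1
        · rw [Function.update_self]; exact hu
        · rw [Function.update_of_ne hk1]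
          rcases eq_or_ne k (Sum.inl (Sum.inr i)) with rfl | hk2
          · rw [Function.update_self]; exact hw
          · rw [Function.update_of_ne hk2]; exact hx k
      have hne := hst _ hupd
      rw [eval_Psi_decomp T f hi x w u] at hne
      exact hne
    rcases contraction_stable hyp with h | h
    · left
      rw [Psi_insert]
      exact h
    · right
      rw [Psi_insert]
      exact h

lemma Psi_empty (T : MultiaffineSubmodule n →ₗ[ℂ] MultiaffineSubmodule n)
    (f : MvPolynomial (Fin n) ℂ) (hf : ∀ i, degreeOf i f ≤ 1) :
    PsiIf T f (fun S Tt => S ∩ (∅ : Finset (Fin n)) = Tt ∩ ∅) ∅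
      = rename Sum.inl (∑ S : Finset (Fin n),
          rename Sum.inl (tauS T S) *
            ∏ i ∈ Sᶜ, (X (Sum.inr i) : MvPolynomial (Fin n ⊕ Fin n) ℂ))
        * rename Sum.inr f := by
  conv_rhs => rw [multiaffine_eq_sum f hf]
  rw [map_sum, map_sum, Finset.sum_mul_sum]
  rw [PsiIf]
  refine Finset.sum_congr rfl fun S _ => Finset.sum_congr rfl fun Tt _ => ?_
  rw [if_pos (by simp)]
  rw [bigTerm]
  simp only [map_mul, map_prod, map_smul, rename_rename, rename_X, rename_C,
    Finset.sdiff_empty, smul_eq_C_mul]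
  ring

lemma Psi_univ (T : MultiaffineSubmodule n →ₗ[ℂ] MultiaffineSubmodule n)
    (f : MvPolynomial (Fin n) ℂ) :
    PsiIf T f (fun S Tt => S ∩ (Finset.univ : Finset (Fin n)) = Tt ∩ Finset.univ)
        Finset.univ
      = rename (Sum.inl ∘ Sum.inl)
          (∑ S : Finset (Fin n), coeff (sqf S) f • tauS T S) := by
  rw [PsiIf, map_sum]
  refine Finset.sum_congr rfl fun S _ => ?_
  simp only [Finset.inter_univ]
  rw [Finset.sum_ite_eq Finset.univ S, if_pos (Finset.mem_univ _)]
  rw [bigTerm]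
  have h1 : (Sᶜ \ (Finset.univ : Finset (Fin n))) = ∅ :=
    Finset.sdiff_eq_empty_iff_subset.mpr (Finset.subset_univ _)
  have h2 : (S \ (Finset.univ : Finset (Fin n))) = ∅ :=
    Finset.sdiff_eq_empty_iff_subset.mpr (Finset.subset_univ _)
  rw [h1, h2]
  simp only [Finset.prod_empty, mul_one, map_smul, smul_eq_C_mul, map_mul, rename_C]

lemma sum_tauS (T : MultiaffineSubmodule n →ₗ[ℂ] MultiaffineSubmodule n)
    (f : MvPolynomial (Fin n) ℂ) (hf : f ∈ MultiaffineSubmodule n) :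
    (∑ S : Finset (Fin n), coeff (sqf S) f • tauS T S)
      = ((T ⟨f, hf⟩ : MultiaffineSubmodule n) : MvPolynomial (Fin n) ℂ) := by
  have hdecomp : (⟨f, hf⟩ : MultiaffineSubmodule n)
      = ∑ S : Finset (Fin n),
          coeff (sqf S) f • ⟨∏ i ∈ S, X i, prodX_mem_multiaffine S⟩ := by
    apply Subtype.ext
    simp only [AddSubmonoidClass.coe_finset_sum, SetLike.val_smul]
    exact multiaffine_eq_sum f (fun i => hf i)
  rw [hdecomp, map_sum, AddSubmonoidClass.coe_finset_sum]
  refine Finset.sum_congr rfl fun S _ => ?_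
  rw [map_smul]
  rfl

lemma backward_direction (T : MultiaffineSubmodule n →ₗ[ℂ] MultiaffineSubmodule n)
    (hΦ : IsStable (∑ S : Finset (Fin n),
      rename Sum.inl
          ((T ⟨∏ i ∈ S, X i, prodX_mem_multiaffine S⟩ : MultiaffineSubmodule n) :
            MvPolynomial (Fin n) ℂ) *
        ∏ i ∈ Sᶜ, (X (Sum.inr i) : MvPolynomial (Fin n ⊕ Fin n) ℂ)))
    (f : MultiaffineSubmodule n) (hfs : IsStable (f : MvPolynomial (Fin n) ℂ)) :
    (T f : MvPolynomial (Fin n) ℂ) = 0 ∨ IsStable (T f : MvPolynomial (Fin n) ℂ) := by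
  have key : ∀ K : Finset (Fin n),
      PsiIf T (f : MvPolynomial (Fin n) ℂ) (fun S Tt => S ∩ K = Tt ∩ K) K = 0
      ∨ IsStable (PsiIf T (f : MvPolynomial (Fin n) ℂ) (fun S Tt => S ∩ K = Tt ∩ K) K) := by
    intro K
    induction K using Finset.induction_on with
    | empty =>
        right
        intro y hy
        rw [Psi_empty T _ (fun i => f.2 i)]
        rw [map_mul]
        apply mul_ne_zero
        · rw [eval_rename]
          exact hΦ _ (fun k => hy _)
        · rw [eval_rename]
          exact hfs _ (fun k => hy _)
    | insert a s hi ih => exact Psi_step T _ hi ih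
  have hfin := key Finset.univ
  rw [Psi_univ, sum_tauS T _ f.2] at hfin
  have hinj : Function.Injective (Sum.inl ∘ Sum.inl : Fin n → (Fin n ⊕ Fin n) ⊕ Fin n) :=
    fun a b h => by simpa using h
  rcases hfin with h | h
  · left
    exact (MvPolynomial.rename_injective _ hinj) (by rw [h, map_zero])
  · right
    intro x hx
    have hy : ∀ k : (Fin n ⊕ Fin n) ⊕ Fin n,
        0 < ((Sum.elim (Sum.elim x (fun _ => Complex.I)) (fun _ => Complex.I)) k).im := by
      intro k
      rcases k with (k | k) | k <;> simp [hx k]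
    have := h _ hy
    rw [eval_rename] at this
    rw [show ((Sum.elim (Sum.elim x (fun _ => Complex.I)) (fun _ => Complex.I))
      ∘ (Sum.inl ∘ Sum.inl)) = x from rfl] at this
    exact this

end Backward2

/-- Borcea–Brändén stability criterion: a linear operator `T : M_n → M_n` with at least
two-dimensional image preserves stability (sending stable polynomials to stable or zero
polynomials) iff `T(∏ᵢ (zᵢ + wᵢ)) = ∑_{S ⊆ {1,…,n}} T(z^S) w^{Sᶜ}` is stable in the
`2n` variables (the `z`'s indexed by `Sum.inl`, the `w`'s by `Sum.inr`). -/
theorem borcea_branden_stability_criterion (n : ℕ) (hn : 1 ≤ n)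
    (T : MultiaffineSubmodule n →ₗ[ℂ] MultiaffineSubmodule n)
    (hT : 2 ≤ Module.finrank ℂ (LinearMap.range T)) :
    (∀ f : MultiaffineSubmodule n, IsStable (f : MvPolynomial (Fin n) ℂ) →
      ((T f : MvPolynomial (Fin n) ℂ) = 0 ∨ IsStable (T f : MvPolynomial (Fin n) ℂ))) ↔
    IsStable (∑ S : Finset (Fin n),
      rename Sum.inl
          ((T ⟨∏ i ∈ S, X i, prodX_mem_multiaffine S⟩ : MultiaffineSubmodule n) :
            MvPolynomial (Fin n) ℂ) *
        ∏ i ∈ Sᶜ, (X (Sum.inr i) : MvPolynomial (Fin n ⊕ Fin n) ℂ)) := by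
  constructor
  · intro hpres
    exact forward_direction n T hT hpres
  · intro hΦ f hfs
    exact backward_direction T hΦ f hfs
end

section
/- Let n ≥ 1, let f ∈ ℂ[z_1,…,z_n] be a multiaffine polynomial invariant under all permutations of the variables, and let A ⊂ ℂ be a convex circular region. Then for any ζ_1,…,ζ_n ∈ A there exists ζ ∈ A such that f(ζ_1,…,ζ_n) = f(ζ,…,ζ). -/
open MvPolynomial

/-- A circular region: a proper subset of ℂ bounded by a circle or a straight line,
and either open or closed. Concretely: an open or closed disk, the open or closed
complement of a disk, or an open or closed half-plane. -/
def IsCircularRegion (A : Set ℂ) : Prop :=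
  (∃ c : ℂ, ∃ r : ℝ, 0 < r ∧
    (A = Metric.ball c r ∨ A = Metric.closedBall c r ∨
     A = (Metric.closedBall c r)ᶜ ∨ A = (Metric.ball c r)ᶜ)) ∨
  (∃ a : ℂ, a ≠ 0 ∧ ∃ t : ℝ,
    (A = {z : ℂ | t < (a * z).im} ∨ A = {z : ℂ | t ≤ (a * z).im}))



noncomputable section GWSAux

open Complex

def gfun (α : ℝ) (γ : ℂ) (δ : ℝ) (u : ℂ) : ℝ :=
  α * ‖u‖^2 + (γ * (starRingEnd ℂ) u).re + δ

def Qfun (α : ℝ) (γ : ℂ) (δ : ℝ) (v : ℂ) : ℝ :=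
  α + (γ * v).re + δ * ‖v‖^2

lemma gfun_zero (α : ℝ) (γ : ℂ) (δ : ℝ) : gfun α γ δ 0 = δ := by
  simp [gfun]

lemma gfun_convex (α : ℝ) (hα : 0 ≤ α) (γ : ℂ) (δ : ℝ) :
    ConvexOn ℝ Set.univ (gfun α γ δ) := by
  constructor
  · exact convex_univ
  · intro x _ y _ a b ha hb hab
    have hre : (γ * (starRingEnd ℂ) (a • x + b • y)).re
        = a * (γ * (starRingEnd ℂ) x).re + b * (γ * (starRingEnd ℂ) y).re := by
      rw [show a • x + b • y = (a:ℂ)*x + (b:ℂ)*y by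
        rw [Complex.real_smul, Complex.real_smul]]
      simp [Complex.mul_re, Complex.add_re, Complex.add_im, Complex.mul_im,
        Complex.conj_re, Complex.conj_im]
      ring
    have hnorm : ‖a • x + b • y‖ ≤ a * ‖x‖ + b * ‖y‖ := by
      calc ‖a • x + b • y‖ ≤ ‖a • x‖ + ‖b • y‖ := norm_add_le _ _
      _ = a * ‖x‖ + b * ‖y‖ := by
          rw [norm_smul, norm_smul, Real.norm_eq_abs, Real.norm_eq_abs,
            _root_.abs_of_nonneg ha, _root_.abs_of_nonneg hb]
    have hsq : ‖a • x + b • y‖^2 ≤ a * ‖x‖^2 + b * ‖y‖^2 := by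
      nlinarith [norm_nonneg (a • x + b • y), norm_nonneg x, norm_nonneg y,
        sq_nonneg (‖x‖ - ‖y‖), mul_nonneg ha hb]
    have hkey := mul_le_mul_of_nonneg_left hsq hα
    have hd : a*δ + b*δ = δ := by rw [← add_mul, hab, one_mul]
    simp only [gfun, smul_eq_mul]
    rw [hre]
    nlinarith [hkey, hd]

lemma gfun_inv (α : ℝ) (γ : ℂ) (δ : ℝ) (v : ℂ) (hv : v ≠ 0) :
    ‖v‖^2 * gfun α γ δ v⁻¹ = Qfun α γ δ v := by
  have hvc : (starRingEnd ℂ) v ≠ 0 := by simpa using hv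
  have h1 : ‖v⁻¹‖^2 = (‖v‖^2)⁻¹ := by rw [norm_inv, inv_pow]
  have h2 : ‖v‖^2 * (γ * (starRingEnd ℂ) v⁻¹).re = (γ * v).re := by
    rw [← Complex.re_ofReal_mul]
    congr 1
    rw [show (starRingEnd ℂ) v⁻¹ = ((starRingEnd ℂ) v)⁻¹ from map_inv₀ _ _]
    rw [show ((‖v‖^2 : ℝ) : ℂ) = v * (starRingEnd ℂ) v by
      rw [Complex.mul_conj, Complex.normSq_eq_norm_sq]]
    field_simp
  have hvn : ‖v‖ ≠ 0 := norm_ne_zero_iff.mpr hv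
  have hv2 : (‖v‖^2 : ℝ) ≠ 0 := pow_ne_zero _ hvn
  simp only [gfun, Qfun, h1]
  rw [mul_add, mul_add, h2, show ‖v‖^2 * (α * (‖v‖^2)⁻¹) = α by rw [mul_comm α, ← mul_assoc, mul_inv_cancel₀ hv2, one_mul]]
  ring

end GWSAux

lemma jensen_exact (g : ℂ → ℝ) (hg : ConvexOn ℝ Set.univ g) :
    ∀ (n : ℕ), 0 < n → ∀ R : Multiset ℂ, Multiset.card R = n →
      (n:ℝ) * g ((n:ℝ)⁻¹ • R.sum) ≤ (R.map g).sum := by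
  intro n
  induction n with
  | zero => intro h; omega
  | succ n ih =>
    intro _ R hR
    have hmem : ∃ r, r ∈ R := by
      rw [← Multiset.card_pos_iff_exists_mem, hR]; omega
    obtain ⟨r, hr⟩ := hmem
    obtain ⟨R', rfl⟩ := Multiset.exists_cons_of_mem hr
    have hR' : Multiset.card R' = n := by
      simpa using hR
    rcases Nat.eq_zero_or_pos n with h0 | hpos
    · subst h0
      have : R' = 0 := Multiset.card_eq_zero.mp hR'
      subst this
      simp
    · have hihn := ih hpos R' hR'
      set y : ℂ := (n:ℝ)⁻¹ • R'.sum with hy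
      have hn1 : (0:ℝ) < (n:ℝ) + 1 := by positivity
      have ha : (0:ℝ) ≤ ((n:ℝ)+1)⁻¹ := by positivity
      have hb : (0:ℝ) ≤ (n:ℝ)/((n:ℝ)+1) := by positivity
      have hab : ((n:ℝ)+1)⁻¹ + (n:ℝ)/((n:ℝ)+1) = 1 := by field_simp; ring
      have hconv := hg.2 (Set.mem_univ r) (Set.mem_univ y) ha hb hab
      have havg : (((n:ℕ)+1:ℕ):ℝ)⁻¹ • (r ::ₘ R').sum
          = ((n:ℝ)+1)⁻¹ • r + ((n:ℝ)/((n:ℝ)+1)) • y := by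
        rw [Multiset.sum_cons, smul_add, hy, smul_smul]
        have hne : (n:ℝ) ≠ 0 := by positivity
        have : (n:ℝ)/((n:ℝ)+1) * (n:ℝ)⁻¹ = ((n:ℝ)+1)⁻¹ := by field_simp
        rw [this]
        push_cast
        ring_nf
      rw [havg]
      have hmul : (((n:ℕ)+1:ℕ):ℝ) * g (((n:ℝ)+1)⁻¹ • r + ((n:ℝ)/((n:ℝ)+1)) • y)
          ≤ (((n:ℕ)+1:ℕ):ℝ) * (((n:ℝ)+1)⁻¹ * g r + ((n:ℝ)/((n:ℝ)+1)) * g y) := by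
        apply mul_le_mul_of_nonneg_left hconv (by positivity)
      calc (((n:ℕ)+1:ℕ):ℝ) * g (((n:ℝ)+1)⁻¹ • r + ((n:ℝ)/((n:ℝ)+1)) • y)
          ≤ (((n:ℕ)+1:ℕ):ℝ) * (((n:ℝ)+1)⁻¹ * g r + ((n:ℝ)/((n:ℝ)+1)) * g y) := hmul
        _ = g r + (n:ℝ) * g y := by
            push_cast
            field_simp
        _ ≤ g r + (R'.map g).sum := by linarith
        _ = ((r ::ₘ R').map g).sum := by rw [Multiset.map_cons, Multiset.sum_cons]

lemma jensen_pad (g : ℂ → ℝ) (hg : ConvexOn ℝ Set.univ g) (n : ℕ) (hn : 0 < n)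
    (R : Multiset ℂ) (hcard : Multiset.card R ≤ n) :
    (n:ℝ) * g ((n:ℝ)⁻¹ • R.sum) ≤ (R.map g).sum
      + ((n:ℝ) - (Multiset.card R : ℝ)) * g 0 := by
  have h := jensen_exact g hg n hn (R + Multiset.replicate (n - Multiset.card R) 0)
    (by simp [Multiset.card_replicate]; omega)
  rw [Multiset.sum_add, Multiset.sum_replicate, smul_zero, add_zero] at h
  rw [Multiset.map_add, Multiset.sum_add, Multiset.map_replicate,
    Multiset.sum_replicate, nsmul_eq_mul] at h
  have : ((n - Multiset.card R : ℕ) : ℝ) = (n:ℝ) - (Multiset.card R : ℝ) := by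
    have := hcard; push_cast [Nat.cast_sub hcard]; ring
  rw [this] at h
  exact h

open Polynomial

lemma msum_nonpos (s : Multiset ℝ) (h : ∀ x ∈ s, x ≤ 0) : s.sum ≤ 0 := by
  induction s using Multiset.induction_on with
  | empty => simp
  | cons a t ih =>
    rw [Multiset.sum_cons]
    have ha := h a (Multiset.mem_cons_self a t)
    have ht := ih (fun x hx => h x (Multiset.mem_cons_of_mem hx))
    linarith

lemma logderiv_prod (w : ℂ) :
    ∀ (R : Multiset ℂ), (∀ r ∈ R, w ≠ r) →
      Polynomial.eval w (Polynomial.derivative (R.map (fun r => Polynomial.X - Polynomial.C r)).prod)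
        = (R.map (fun r => (w - r)⁻¹)).sum
          * Polynomial.eval w (R.map (fun r => Polynomial.X - Polynomial.C r)).prod := by
  intro R
  induction R using Multiset.induction_on with
  | empty => simp
  | cons a t ih =>
    intro h
    have ha : w - a ≠ 0 := sub_ne_zero.mpr (h a (Multiset.mem_cons_self a t))
    have ht := ih (fun r hr => h r (Multiset.mem_cons_of_mem hr))
    simp only [Multiset.map_cons, Multiset.prod_cons, Multiset.sum_cons,
      derivative_mul, Polynomial.eval_add, Polynomial.eval_mul]
    rw [ht]
    simp only [Polynomial.derivative_sub, Polynomial.derivative_X, Polynomial.derivative_C, sub_zero,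
      Polynomial.eval_one, Polynomial.eval_sub, Polynomial.eval_X, Polynomial.eval_C]
    field_simp

noncomputable section Engine
open Complex Polynomial

lemma engine {n : ℕ} (hn : 1 ≤ n) {α δ : ℝ} {γ : ℂ} (hα : 0 ≤ α) (hδ : δ ≤ 0)
    (w ζ₀ : ℂ) (R : Multiset ℂ) (hcard : Multiset.card R ≤ n)
    (hrel : (n : ℂ) = (w - ζ₀) * (R.map fun r => (w - r)⁻¹).sum)
    (hne : ∀ r ∈ R, w ≠ r)
    (hQ : ∀ r ∈ R, Qfun α γ δ (w - r) ≤ 0) :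
    Qfun α γ δ (w - ζ₀) ≤ 0 ∧
      ((∀ r ∈ R, Qfun α γ δ (w - r) < 0) → Qfun α γ δ (w - ζ₀) < 0) := by
  have hnC : ((n:ℕ) : ℂ) ≠ 0 := Nat.cast_ne_zero.mpr (by omega)
  set S : ℂ := (R.map fun r => (w - r)⁻¹).sum with hS
  have hwz : w - ζ₀ ≠ 0 := by
    intro h; rw [h, zero_mul] at hrel; exact hnC hrel
  have hSne : S ≠ 0 := by
    intro h; rw [h, mul_zero] at hrel; exact hnC hrel
  have hRne : R ≠ 0 := by
    intro h; apply hSne; rw [hS, h]; simp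
  -- average identity
  have havg : ((n:ℝ))⁻¹ • S = (w - ζ₀)⁻¹ := by
    rw [Complex.real_smul, Complex.ofReal_inv, Complex.ofReal_natCast]
    rw [hrel, mul_inv, mul_assoc, inv_mul_cancel₀ hSne, mul_one]
  set U : Multiset ℂ := R.map (fun r => (w - r)⁻¹) with hU
  have hUcard : Multiset.card U = Multiset.card R := by rw [hU, Multiset.card_map]
  have hgconv := gfun_convex α hα γ δ
  have hjen := jensen_pad (gfun α γ δ) hgconv n (by omega) U (by rw [hUcard]; exact hcard)
  rw [hUcard] at hjen
  have hUsum : U.sum = S := by rw [hU, hS]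
  rw [hUsum, havg, gfun_zero] at hjen
  -- each element bound
  have helem : ∀ u ∈ U, gfun α γ δ u ≤ 0 ∧ ((∀ r ∈ R, Qfun α γ δ (w - r) < 0) → gfun α γ δ u < 0) := by
    intro u hu
    rw [hU, Multiset.mem_map] at hu
    obtain ⟨r, hrR, rfl⟩ := hu
    have hvne : w - r ≠ 0 := sub_ne_zero.mpr (hne r hrR)
    have hid := gfun_inv α γ δ (w - r) hvne
    have hpos : (0:ℝ) < ‖w - r‖^2 := pow_pos (norm_pos_iff.mpr hvne) 2
    constructor
    · nlinarith [hQ r hrR]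
    · intro hstrict
      nlinarith [hstrict r hrR]
  have hsum_le : (U.map (gfun α γ δ)).sum ≤ 0 :=
    msum_nonpos _ (by
      intro x hx
      rw [Multiset.mem_map] at hx
      obtain ⟨u, hu, rfl⟩ := hx
      exact (helem u hu).1)
  have hcast_nonneg : (0:ℝ) ≤ (n:ℝ) - (Multiset.card R : ℝ) :=
    sub_nonneg.mpr (by exact_mod_cast hcard)
  have hpad : ((n:ℝ) - (Multiset.card R : ℝ)) * δ ≤ 0 :=
    mul_nonpos_of_nonneg_of_nonpos hcast_nonneg hδ
  have hnR : (0:ℝ) < (n:ℝ) := by positivity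
  have hidz := gfun_inv α γ δ (w - ζ₀) hwz
  have hposz : (0:ℝ) < ‖w - ζ₀‖^2 := pow_pos (norm_pos_iff.mpr hwz) 2
  constructor
  · nlinarith [hjen, hsum_le, hpad]
  · intro hstrict
    obtain ⟨r₀, hr₀⟩ := Multiset.exists_mem_of_ne_zero hRne
    have hu₀ : (w - r₀)⁻¹ ∈ U := by
      rw [hU]; exact Multiset.mem_map_of_mem _ hr₀
    obtain ⟨U', hU'⟩ := Multiset.exists_cons_of_mem hu₀
    have hsum_lt : (U.map (gfun α γ δ)).sum < 0 := by
      rw [hU', Multiset.map_cons, Multiset.sum_cons]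
      have h1 : gfun α γ δ (w - r₀)⁻¹ < 0 := (helem _ hu₀).2 hstrict
      have h2 : (U'.map (gfun α γ δ)).sum ≤ 0 := by
        apply msum_nonpos
        intro x hx
        rw [Multiset.mem_map] at hx
        obtain ⟨u, hu, rfl⟩ := hx
        exact (helem u (by rw [hU']; exact Multiset.mem_cons_of_mem hu)).1
      linarith
    nlinarith [hjen, hsum_lt, hpad]

end Engine

noncomputable section KeyStep
open Complex Polynomial

lemma Qfun_ball (w c p : ℂ) (R₀ : ℝ) :
    Qfun (R₀^2 - ‖w - c‖^2) (2 * (starRingEnd ℂ) (w - c)) (-1) (w - p)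
      = R₀^2 - ‖p - c‖^2 := by
  simp only [Qfun, Complex.sq_norm, Complex.normSq_apply,
    Complex.mul_re, Complex.sub_re, Complex.sub_im, Complex.conj_re, Complex.conj_im,
    Complex.ofReal_re, Complex.mul_im, Complex.re_ofNat, Complex.im_ofNat]
  ring

lemma Qfun_half (w p a : ℂ) (t : ℝ) :
    Qfun ((a*w).im - t) (Complex.I * a) 0 (w - p) = (a*p).im - t := by
  simp only [Qfun, Complex.mul_re, Complex.mul_im, Complex.I_re, Complex.I_im,
    Complex.sub_re, Complex.sub_im]
  ring

lemma midpoint_calc (c d : ℂ) :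
    (1/2 : ℝ) • (c + d) + (1/2 : ℝ) • (c - d) = c := by
  rw [Complex.real_smul, Complex.real_smul]
  push_cast
  ring

lemma not_convex_compl_closedBall (c : ℂ) (r : ℝ) (hr : 0 < r) :
    ¬ Convex ℝ (Metric.closedBall c r)ᶜ := by
  intro h
  set d : ℂ := ((r+1 : ℝ) : ℂ) with hd
  have hnd : ‖d‖ = r + 1 := by
    rw [hd, Complex.norm_real, Real.norm_eq_abs, abs_of_pos (by linarith)]
  have hdist : ∀ s : ℂ, dist (c + s) c = ‖s‖ := by
    intro s; rw [Complex.dist_eq]; ring_nf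
  have hp : c + d ∈ (Metric.closedBall c r)ᶜ := by
    simp only [Set.mem_compl_iff, Metric.mem_closedBall, hdist, not_le, hnd]
    linarith
  have hq : c + (-d) ∈ (Metric.closedBall c r)ᶜ := by
    simp only [Set.mem_compl_iff, Metric.mem_closedBall, hdist, not_le, norm_neg, hnd]
    linarith
  have hcomb := h hp hq (by norm_num : (0:ℝ) ≤ 1/2) (by norm_num : (0:ℝ) ≤ 1/2)
    (by norm_num)
  rw [show c + (-d) = c - d by ring, midpoint_calc] at hcomb
  exact hcomb (Metric.mem_closedBall_self hr.le)

lemma not_convex_compl_ball (c : ℂ) (r : ℝ) (hr : 0 < r) :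
    ¬ Convex ℝ (Metric.ball c r)ᶜ := by
  intro h
  set d : ℂ := ((r+1 : ℝ) : ℂ) with hd
  have hnd : ‖d‖ = r + 1 := by
    rw [hd, Complex.norm_real, Real.norm_eq_abs, abs_of_pos (by linarith)]
  have hdist : ∀ s : ℂ, dist (c + s) c = ‖s‖ := by
    intro s; rw [Complex.dist_eq]; ring_nf
  have hp : c + d ∈ (Metric.ball c r)ᶜ := by
    simp only [Set.mem_compl_iff, Metric.mem_ball, hdist, not_lt, hnd]
    linarith
  have hq : c + (-d) ∈ (Metric.ball c r)ᶜ := by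
    simp only [Set.mem_compl_iff, Metric.mem_ball, hdist, not_lt, norm_neg, hnd]
    linarith
  have hcomb := h hp hq (by norm_num : (0:ℝ) ≤ 1/2) (by norm_num : (0:ℝ) ≤ 1/2)
    (by norm_num)
  rw [show c + (-d) = c - d by ring, midpoint_calc] at hcomb
  exact hcomb (Metric.mem_ball_self hr)

end KeyStep

noncomputable section KeyStep2
open Complex Polynomial

lemma keystep (n : ℕ) (hn : 1 ≤ n) (F : Polynomial ℂ) (hdeg : F.natDegree ≤ n)
    (A : Set ℂ) (hA : IsCircularRegion A) (hconv : Convex ℝ A)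
    (w : ℂ) (hw : w ∈ A) (ζ₀ : ℂ) (hz : ζ₀ ∈ A) :
    ∃ z ∈ A, (n:ℂ) * F.eval z
      = (n:ℂ) * F.eval w + (ζ₀ - w) * F.derivative.eval w := by
  have hnC : ((n:ℕ):ℂ) ≠ 0 := Nat.cast_ne_zero.mpr (by omega)
  set v : ℂ := F.eval w + (ζ₀ - w) * F.derivative.eval w / n with hv
  have hnv : (n:ℂ) * v = (n:ℂ) * F.eval w + (ζ₀ - w) * F.derivative.eval w := by
    rw [hv]; field_simp
  set G : Polynomial ℂ := F - Polynomial.C v with hG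
  have hG' : G.derivative = F.derivative := by
    rw [hG, derivative_sub, derivative_C, sub_zero]
  have hGeval : ∀ x : ℂ, G.eval x = F.eval x - v := by
    intro x; rw [hG]; simp
  have hrel : (n:ℂ) * G.eval w + (ζ₀ - w) * G.derivative.eval w = 0 := by
    rw [hG', hGeval]
    have : (n:ℂ) * (F.eval w - v) = -((ζ₀ - w) * F.derivative.eval w) := by
      rw [mul_sub, hnv]; ring
    rw [this]; ring
  by_cases hG0 : G = 0
  · refine ⟨w, hw, ?_⟩
    have hFC : F = Polynomial.C v := by rwa [sub_eq_zero] at hG0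
    rw [hFC]; simp
  · have hsplits : Splits G := IsAlgClosed.splits G
    set R : Multiset ℂ := G.roots with hR
    have hcardR : Multiset.card R = G.natDegree := splits_iff_card_roots.mp hsplits
    have hdegG : G.natDegree ≤ n := by
      calc G.natDegree ≤ max F.natDegree (Polynomial.C v).natDegree := Polynomial.natDegree_sub_le _ _
        _ ≤ n := by rw [Polynomial.natDegree_C]; simpa using hdeg
    have hcard : Multiset.card R ≤ n := hcardR ▸ hdegG
    by_cases hroot : ∃ z ∈ R, z ∈ A
    · obtain ⟨z, hzR, hzA⟩ := hroot
      have hzr : G.eval z = 0 := by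
        have := (Polynomial.mem_roots'.mp hzR).2
        exact this
      refine ⟨z, hzA, ?_⟩
      have hFz : F.eval z = v := by
        rw [hGeval] at hzr; exact sub_eq_zero.mp hzr
      rw [hFz, hnv]
    · push_neg at hroot
      have hne : ∀ r ∈ R, w ≠ r := by
        intro r hr hwr; exact hroot r hr (hwr ▸ hw)
      have hGwne : G.eval w ≠ 0 := by
        intro h
        exact hroot w (Polynomial.mem_roots'.mpr ⟨hG0, h⟩) hw
      have hfact := hsplits.eq_prod_roots
      rw [← hR] at hfact
      set P : Polynomial ℂ := (R.map fun a => Polynomial.X - Polynomial.C a).prod with hP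
      have hlc : G.leadingCoeff ≠ 0 := leadingCoeff_ne_zero.mpr hG0
      have hGw : G.eval w = G.leadingCoeff * P.eval w := by
        conv_lhs => rw [hfact]
        simp
      have hPw : P.eval w ≠ 0 := by
        intro h; apply hGwne; rw [hGw, h, mul_zero]
      set S : ℂ := (R.map fun r => (w - r)⁻¹).sum with hS
      have hld := logderiv_prod w R hne
      have hG'w : G.derivative.eval w = G.leadingCoeff * (S * P.eval w) := by
        conv_lhs => rw [hfact]
        rw [derivative_C_mul]
        simp only [Polynomial.eval_mul, Polynomial.eval_C]
        rw [hP, hld, ← hS]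
      have hrel2 : ((n:ℕ):ℂ) = (w - ζ₀) * S := by
        have h3 : (((n:ℕ):ℂ) - (w - ζ₀) * S) * (G.leadingCoeff * P.eval w) = 0 := by
          rw [hGw, hG'w] at hrel
          linear_combination hrel
        rcases mul_eq_zero.mp h3 with h4 | h4
        · exact sub_eq_zero.mp h4
        · exact absurd h4 (mul_ne_zero hlc hPw)
      exfalso
      rw [hS] at hrel2
      have hballmem : ∀ (c : ℂ) (r : ℝ) (x : ℂ), x ∈ Metric.ball c r ↔ ‖x - c‖ < r := by
        intro c r x; rw [Metric.mem_ball, Complex.dist_eq]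
      have hcballmem : ∀ (c : ℂ) (r : ℝ) (x : ℂ), x ∈ Metric.closedBall c r ↔ ‖x - c‖ ≤ r := by
        intro c r x; rw [Metric.mem_closedBall, Complex.dist_eq]
      rcases hA with ⟨c, r₀, hr₀, hcase⟩ | ⟨a, ha, t, hcase⟩
      · rcases hcase with hAeq | hAeq | hAeq | hAeq
        · -- open ball
          subst hAeq
          have hα : (0:ℝ) ≤ r₀^2 - ‖w - c‖^2 := by
            have := (hballmem c r₀ w).mp hw
            nlinarith [norm_nonneg (w - c)]
          have heng := engine hn hα (by norm_num : (-1:ℝ) ≤ 0) w ζ₀ R hcard hrel2 hne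
            (by
              intro r hr
              rw [Qfun_ball]
              have := (hballmem c r₀ r).not.mp (hroot r hr)
              push_neg at this
              nlinarith [norm_nonneg (r - c)])
          have hzlt := (hballmem c r₀ ζ₀).mp hz
          have := heng.1
          rw [Qfun_ball] at this
          nlinarith [norm_nonneg (ζ₀ - c)]
        · -- closed ball
          subst hAeq
          have hα : (0:ℝ) ≤ r₀^2 - ‖w - c‖^2 := by
            have := (hcballmem c r₀ w).mp hw
            nlinarith [norm_nonneg (w - c)]
          have hQs : ∀ r ∈ R, Qfun (r₀^2 - ‖w - c‖^2) (2 * (starRingEnd ℂ) (w - c)) (-1) (w - r) < 0 := by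
            intro r hr
            rw [Qfun_ball]
            have := (hcballmem c r₀ r).not.mp (hroot r hr)
            push_neg at this
            nlinarith [norm_nonneg (r - c), hr₀]
          have heng := engine hn hα (by norm_num : (-1:ℝ) ≤ 0) w ζ₀ R hcard hrel2 hne
            (fun r hr => (hQs r hr).le)
          have hzle := (hcballmem c r₀ ζ₀).mp hz
          have := heng.2 hQs
          rw [Qfun_ball] at this
          nlinarith [norm_nonneg (ζ₀ - c)]
        · exact (not_convex_compl_closedBall c r₀ hr₀) (hAeq ▸ hconv)
        · exact (not_convex_compl_ball c r₀ hr₀) (hAeq ▸ hconv)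
      · rcases hcase with hAeq | hAeq
        · -- open half-plane
          subst hAeq
          have hα : (0:ℝ) ≤ (a*w).im - t := by
            have : t < (a*w).im := hw
            linarith
          have heng := engine hn hα (le_refl (0:ℝ)) w ζ₀ R hcard hrel2 hne
            (by
              intro r hr
              rw [Qfun_half]
              have : ¬ (t < (a*r).im) := hroot r hr
              push_neg at this
              linarith)
          have hzlt : t < (a*ζ₀).im := hz
          have := heng.1
          rw [Qfun_half] at this
          linarith
        · -- closed half-plane
          subst hAeq
          have hα : (0:ℝ) ≤ (a*w).im - t := by
            have : t ≤ (a*w).im := hw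
            linarith
          have hQs : ∀ r ∈ R, Qfun ((a*w).im - t) (Complex.I * a) 0 (w - r) < 0 := by
            intro r hr
            rw [Qfun_half]
            have : ¬ (t ≤ (a*r).im) := hroot r hr
            push_neg at this
            linarith
          have heng := engine hn hα (le_refl (0:ℝ)) w ζ₀ R hcard hrel2 hne
            (fun r hr => (hQs r hr).le)
          have hzle : t ≤ (a*ζ₀).im := hz
          have := heng.2 hQs
          rw [Qfun_half] at this
          linarith

end KeyStep2

noncomputable section MvAux
open MvPolynomial

/-- diagonal univariate polynomial associated to f -/
def diagPoly {n : ℕ} (f : MvPolynomial (Fin n) ℂ) : Polynomial ℂ :=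
  MvPolynomial.aeval (fun _ => (Polynomial.X : Polynomial ℂ)) f

lemma diagPoly_eval {n : ℕ} (f : MvPolynomial (Fin n) ℂ) (z : ℂ) :
    Polynomial.eval z (diagPoly f) = eval (fun _ => z) f := by
  have h := congrFun (congrArg (fun (φ : MvPolynomial (Fin n) ℂ →ₐ[ℂ] ℂ) => (φ : MvPolynomial (Fin n) ℂ → ℂ))
    (MvPolynomial.comp_aeval (fun _ => (Polynomial.X : Polynomial ℂ)) (Polynomial.aeval z))) f
  simp only [AlgHom.coe_comp, Function.comp_apply, Polynomial.aeval_X] at h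
  rw [diagPoly, ← Polynomial.coe_aeval_eq_eval]
  exact h

lemma diagPoly_monomial {n : ℕ} (m : Fin n →₀ ℕ) (cc : ℂ) :
    diagPoly (monomial m cc)
      = Polynomial.C cc * Polynomial.X ^ (∑ i : Fin n, m i) := by
  rw [diagPoly, MvPolynomial.aeval_monomial]
  rw [Polynomial.algebraMap_eq]
  congr 1
  rw [Finsupp.prod]
  rw [Finset.prod_pow_eq_pow_sum]
  congr 1
  apply Finset.sum_subset (Finset.subset_univ _)
  intro i _ hi
  exact Finsupp.notMem_support_iff.mp hi

lemma diagPoly_natDegree_le {n : ℕ} (f : MvPolynomial (Fin n) ℂ)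
    (hexp : ∀ m ∈ f.support, ∀ i, m i ≤ 1) :
    (diagPoly f).natDegree ≤ n := by
  conv_lhs => rw [← MvPolynomial.support_sum_monomial_coeff f]
  rw [diagPoly, map_sum]
  apply Polynomial.natDegree_sum_le_of_forall_le
  intro m hm
  rw [← diagPoly, diagPoly_monomial]
  have hd : (∑ i : Fin n, m i) ≤ n := by
    calc (∑ i : Fin n, m i) ≤ ∑ _i : Fin n, 1 :=
      Finset.sum_le_sum (fun i _ => hexp m hm i)
    _ = n := by simp
  refine le_trans (Polynomial.natDegree_mul_le) ?_
  simpa [Polynomial.natDegree_C, Polynomial.natDegree_pow, Polynomial.natDegree_X]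
    using hd

end MvAux

noncomputable section SumLemma
open MvPolynomial

lemma eval_update_monomial_zero {n : ℕ} (m : Fin n →₀ ℕ) (cc : ℂ) (x y : ℂ)
    (i : Fin n) (hi : m i = 0) :
    eval (Function.update (fun _ => x) i y) (monomial m cc)
      = cc * x ^ (∑ j : Fin n, m j) := by
  rw [MvPolynomial.eval_monomial]
  congr 1
  rw [Finsupp.prod]
  have hstep : ∀ j ∈ m.support, Function.update (fun _ => x) i y j ^ m j = x ^ m j := by
    intro j hj
    have hji : j ≠ i := by
      intro h; subst h; exact Finsupp.mem_support_iff.mp hj hi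
    rw [Function.update_of_ne hji]
  rw [Finset.prod_congr rfl hstep, Finset.prod_pow_eq_pow_sum]
  congr 1
  apply Finset.sum_subset (Finset.subset_univ _)
  intro j _ hj
  exact Finsupp.notMem_support_iff.mp hj

lemma eval_update_monomial_one {n : ℕ} (m : Fin n →₀ ℕ) (cc : ℂ) (x y : ℂ)
    (i : Fin n) (hi : m i = 1) :
    eval (Function.update (fun _ => x) i y) (monomial m cc)
      = cc * (y * x ^ ((∑ j : Fin n, m j) - 1)) := by
  rw [MvPolynomial.eval_monomial]
  congr 1
  rw [Finsupp.prod]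
  have hisupp : i ∈ m.support := Finsupp.mem_support_iff.mpr (by omega)
  rw [← Finset.mul_prod_erase _ _ hisupp]
  congr 1
  · rw [Function.update_self, hi, pow_one]
  · have hstep : ∀ j ∈ m.support.erase i,
        Function.update (fun _ => x) i y j ^ m j = x ^ m j := by
      intro j hj
      rw [Function.update_of_ne (Finset.ne_of_mem_erase hj)]
    rw [Finset.prod_congr rfl hstep, Finset.prod_pow_eq_pow_sum]
    congr 1
    have h1 : ∑ j ∈ m.support.erase i, m j = (∑ j ∈ m.support, m j) - 1 := by
      have := Finset.add_sum_erase _ m hisupp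
      omega
    rw [h1]
    congr 1
    apply Finset.sum_subset (Finset.subset_univ _)
    intro j _ hj
    exact Finsupp.notMem_support_iff.mp hj

lemma card_support_eq {n : ℕ} (m : Fin n →₀ ℕ) (hm : ∀ i, m i ≤ 1) :
    m.support.card = ∑ j : Fin n, m j := by
  have h1 : ∑ j : Fin n, m j = ∑ j ∈ m.support, m j := by
    symm
    apply Finset.sum_subset (Finset.subset_univ _)
    intro j _ hj
    exact Finsupp.notMem_support_iff.mp hj
  have h2 : ∀ j ∈ m.support, m j = 1 := by
    intro j hj
    have := Finsupp.mem_support_iff.mp hj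
    have := hm j
    omega
  rw [h1, Finset.sum_congr rfl h2]
  simp

lemma sum_eval_update_monomial {n : ℕ} (m : Fin n →₀ ℕ) (hm : ∀ i, m i ≤ 1)
    (cc : ℂ) (x y : ℂ) :
    ∑ i : Fin n, eval (Function.update (fun _ => x) i y) (monomial m cc)
      = (n:ℂ) * Polynomial.eval x (diagPoly (monomial m cc))
        + (y - x) * Polynomial.eval x (Polynomial.derivative (diagPoly (monomial m cc))) := by
  set d : ℕ := ∑ j : Fin n, m j with hd
  have hdn : d ≤ n := by
    calc d ≤ ∑ _j : Fin n, 1 := Finset.sum_le_sum (fun i _ => hm i)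
    _ = n := by simp
  have hcard : m.support.card = d := card_support_eq m hm
  have hsplit : ∑ i : Fin n, eval (Function.update (fun _ => x) i y) (monomial m cc)
      = ∑ i ∈ Finset.univ \ m.support, (cc * x ^ d)
        + ∑ i ∈ m.support, (cc * (y * x ^ (d-1))) := by
    rw [← Finset.sum_sdiff (Finset.subset_univ m.support)]
    congr 1
    · apply Finset.sum_congr rfl
      intro i hi
      have hi0 : m i = 0 := Finsupp.notMem_support_iff.mp (Finset.mem_sdiff.mp hi).2
      rw [eval_update_monomial_zero m cc x y i hi0, hd]
    · apply Finset.sum_congr rfl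
      intro i hi
      have hi1 : m i = 1 := by
        have := Finsupp.mem_support_iff.mp hi
        have := hm i
        omega
      rw [eval_update_monomial_one m cc x y i hi1, hd]
  rw [hsplit, Finset.sum_const, Finset.sum_const, hcard, Finset.card_sdiff_of_subset (Finset.subset_univ _),
    Finset.card_univ, Fintype.card_fin, hcard]
  rw [diagPoly_monomial, ← hd]
  rw [Polynomial.derivative_C_mul, Polynomial.derivative_X_pow]
  simp only [Polynomial.eval_mul, Polynomial.eval_C, Polynomial.eval_pow, Polynomial.eval_X,
    nsmul_eq_mul]
  rcases Nat.eq_zero_or_pos d with h0 | hpos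
  · rw [h0]
    simp
  · have hxd : x ^ d = x ^ (d-1) * x := by
      conv_lhs => rw [show d = (d-1) + 1 by omega]
      rw [pow_succ]
    rw [hxd]
    have hc1 : ((n - d : ℕ) : ℂ) = (n : ℂ) - (d : ℂ) := by
      push_cast [Nat.cast_sub hdn]; ring
    rw [hc1]
    push_cast
    ring

lemma sum_eval_update {n : ℕ} (f : MvPolynomial (Fin n) ℂ)
    (hexp : ∀ m ∈ f.support, ∀ i, m i ≤ 1) (x y : ℂ) :
    ∑ i : Fin n, eval (Function.update (fun _ => x) i y) f
      = (n:ℂ) * Polynomial.eval x (diagPoly f)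
        + (y - x) * Polynomial.eval x (Polynomial.derivative (diagPoly f)) := by
  conv_lhs => rw [← MvPolynomial.support_sum_monomial_coeff f]
  conv_rhs => rw [← MvPolynomial.support_sum_monomial_coeff f]
  rw [diagPoly, map_sum, map_sum, Polynomial.eval_finset_sum, Polynomial.eval_finset_sum]
  simp only [map_sum]
  rw [Finset.sum_comm]
  rw [Finset.mul_sum, Finset.mul_sum, ← Finset.sum_add_distrib]
  apply Finset.sum_congr rfl
  intro m hm
  have := sum_eval_update_monomial m (fun i => hexp m hm i) (coeff m f) x y
  rw [diagPoly_monomial] at this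
  rw [this]
  rw [show ((MvPolynomial.aeval fun _ => (Polynomial.X : Polynomial ℂ)) ((monomial m) (MvPolynomial.coeff m f))) = diagPoly ((monomial m) (MvPolynomial.coeff m f)) from rfl, diagPoly_monomial]

end SumLemma

noncomputable section Subst
open MvPolynomial

def gsubst (k : ℕ) (c₀ : ℂ) : Fin (k+1) → MvPolynomial (Fin k) ℂ :=
  Fin.cases (MvPolynomial.C c₀) (fun j => MvPolynomial.X j)

lemma eval_gsubst (k : ℕ) (c₀ : ℂ) (f : MvPolynomial (Fin (k+1)) ℂ) (v : Fin k → ℂ) :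
    MvPolynomial.eval v (MvPolynomial.aeval (gsubst k c₀) f)
      = MvPolynomial.eval (Fin.cons c₀ v) f := by
  have h := congrFun (congrArg
      (fun (φ : MvPolynomial (Fin (k+1)) ℂ →ₐ[ℂ] ℂ) => (φ : MvPolynomial (Fin (k+1)) ℂ → ℂ))
      (MvPolynomial.comp_aeval (gsubst k c₀) (MvPolynomial.aeval v))) f
  simp only [AlgHom.coe_comp, Function.comp_apply] at h
  have hfun : (fun i => MvPolynomial.aeval v (gsubst k c₀ i)) = Fin.cons c₀ v := by
    funext i
    refine Fin.cases ?_ ?_ i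
    · simp [gsubst]
    · intro j; simp [gsubst]
  rw [hfun] at h
  exact h

lemma aeval_gsubst_monomial (k : ℕ) (c₀ : ℂ) (m : Fin (k+1) →₀ ℕ) (cc : ℂ) :
    MvPolynomial.aeval (gsubst k c₀) (monomial m cc)
      = monomial (Finsupp.equivFunOnFinite.symm (fun j : Fin k => m j.succ)) (cc * c₀ ^ m 0) := by
  rw [MvPolynomial.aeval_monomial]
  rw [Finsupp.prod_fintype _ _ (fun i => pow_zero _)]
  rw [Fin.prod_univ_succ]
  rw [MvPolynomial.monomial_eq]
  rw [Finsupp.prod_fintype _ _ (fun i => pow_zero _)]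
  have h0 : gsubst k c₀ 0 = MvPolynomial.C c₀ := rfl
  have hsucc : ∀ j : Fin k, gsubst k c₀ j.succ = MvPolynomial.X j := fun j => rfl
  rw [h0]
  have halg : (algebraMap ℂ (MvPolynomial (Fin k) ℂ)) cc = MvPolynomial.C cc := rfl
  rw [halg]
  have hC : (MvPolynomial.C c₀ : MvPolynomial (Fin k) ℂ) ^ m 0 = MvPolynomial.C (c₀ ^ m 0) :=
    (map_pow MvPolynomial.C c₀ (m 0)).symm
  rw [hC, ← mul_assoc, ← MvPolynomial.C_mul]
  congr 1

lemma degreeOf_monomial_le' {k : ℕ} (m : Fin k →₀ ℕ) (b : ℂ) (j : Fin k) :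
    degreeOf j (monomial m b) ≤ m j := by
  rw [MvPolynomial.degreeOf_le_iff]
  intro m' hm'
  rw [MvPolynomial.support_monomial] at hm'
  split at hm'
  · simp at hm'
  · rw [Finset.mem_singleton] at hm'
    subst hm'
    exact le_refl _

lemma gsubst_multiaffine (k : ℕ) (c₀ : ℂ) (f : MvPolynomial (Fin (k+1)) ℂ)
    (hexp : ∀ m ∈ f.support, ∀ i, m i ≤ 1) (j : Fin k) :
    degreeOf j (MvPolynomial.aeval (gsubst k c₀) f) ≤ 1 := by
  conv_lhs => rw [← MvPolynomial.support_sum_monomial_coeff f]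
  rw [map_sum]
  apply Finset.sum_induction _ (fun p => degreeOf j p ≤ 1)
  · intro a b ha hb
    exact le_trans (MvPolynomial.degreeOf_add_le j a b) (by simp [ha, hb])
  · simp
  · intro m hm
    rw [aeval_gsubst_monomial]
    refine le_trans (degreeOf_monomial_le' _ _ j) ?_
    rw [Finsupp.equivFunOnFinite_symm_apply_apply]
    exact hexp m hm j.succ

lemma gsubst_symm (k : ℕ) (c₀ : ℂ) (f : MvPolynomial (Fin (k+1)) ℂ)
    (hsym : ∀ σ : Equiv.Perm (Fin (k+1)), rename ⇑σ f = f) (σ : Equiv.Perm (Fin k)) :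
    rename ⇑σ (MvPolynomial.aeval (gsubst k c₀) f) = MvPolynomial.aeval (gsubst k c₀) f := by
  set τ : Equiv.Perm (Fin (k+1)) := Equiv.Perm.decomposeFin.symm (0, σ) with hτ
  have h1 : rename ⇑σ (MvPolynomial.aeval (gsubst k c₀) f)
      = MvPolynomial.aeval (fun i => rename ⇑σ (gsubst k c₀ i)) f := by
    exact congrFun (congrArg
      (fun (φ : MvPolynomial (Fin (k+1)) ℂ →ₐ[ℂ] MvPolynomial (Fin k) ℂ) =>
        (φ : MvPolynomial (Fin (k+1)) ℂ → MvPolynomial (Fin k) ℂ))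
      (MvPolynomial.comp_aeval (gsubst k c₀) (rename ⇑σ))) f
  have h2 : MvPolynomial.aeval (gsubst k c₀) f
      = MvPolynomial.aeval ((gsubst k c₀) ∘ ⇑τ) f := by
    conv_lhs => rw [← hsym τ]
    rw [MvPolynomial.aeval_rename]
  have h3 : (fun i => rename ⇑σ (gsubst k c₀ i)) = (gsubst k c₀) ∘ ⇑τ := by
    funext i
    refine Fin.cases ?_ ?_ i
    · have : τ 0 = 0 := Equiv.Perm.decomposeFin_symm_apply_zero 0 σ
      simp only [Function.comp_apply, this]
      simp [gsubst]
    · intro j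
      have : τ j.succ = (σ j).succ := by
        rw [hτ, Equiv.Perm.decomposeFin_symm_apply_succ, Equiv.swap_self]
        rfl
      simp only [Function.comp_apply, this]
      simp [gsubst]
  rw [h1, h3, ← h2]

end Subst

noncomputable section Main
open MvPolynomial

lemma cons_eq_ite {k : ℕ} (c₀ w : ℂ) :
    (Fin.cons c₀ (fun _ => w) : Fin (k+1) → ℂ) = fun j => if j = 0 then c₀ else w := by
  funext j
  refine Fin.cases ?_ ?_ j
  · simp
  · intro i
    simp [Fin.succ_ne_zero]

lemma gws_aux : ∀ (n : ℕ), 1 ≤ n → ∀ (f : MvPolynomial (Fin n) ℂ),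
    (∀ i, degreeOf i f ≤ 1) → (∀ σ : Equiv.Perm (Fin n), rename ⇑σ f = f) →
    ∀ (A : Set ℂ), IsCircularRegion A → Convex ℝ A →
    ∀ ζ : Fin n → ℂ, (∀ i, ζ i ∈ A) →
    ∃ z ∈ A, eval ζ f = eval (fun _ => z) f := by
  intro n
  induction n with
  | zero => omega
  | succ k ih =>
    intro _ f hma hsym A hA hconv ζ hζ
    rcases Nat.eq_zero_or_pos k with hk0 | hk1
    · subst hk0
      refine ⟨ζ 0, hζ 0, ?_⟩
      have hzf : ζ = fun _ => ζ 0 := by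
        funext i
        exact congrArg ζ (Fin.eq_zero i)
      rw [← hzf]
    · have hexp : ∀ m ∈ f.support, ∀ i, m i ≤ 1 := by
        intro m hm i; exact MvPolynomial.degreeOf_le_iff.mp (hma i) m hm
      set c₀ := ζ 0 with hc₀
      set f₀ := MvPolynomial.aeval (gsubst k c₀) f with hf₀
      have hma₀ : ∀ j, degreeOf j f₀ ≤ 1 := fun j => gsubst_multiaffine k c₀ f hexp j
      have hsym₀ : ∀ σ : Equiv.Perm (Fin k), rename ⇑σ f₀ = f₀ := gsubst_symm k c₀ f hsym
      obtain ⟨w, hwA, hw⟩ := ih hk1 f₀ hma₀ hsym₀ A hA hconv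
        (fun j => ζ j.succ) (fun j => hζ j.succ)
      rw [hf₀, eval_gsubst, eval_gsubst] at hw
      have hcons : (Fin.cons c₀ (fun j => ζ j.succ) : Fin (k+1) → ℂ) = ζ := by
        funext i
        refine Fin.cases ?_ ?_ i
        · rfl
        · intro j; rfl
      rw [hcons] at hw
      set F := diagPoly f with hF
      have hdeg : F.natDegree ≤ k+1 := diagPoly_natDegree_le f hexp
      obtain ⟨z, hzA, hzeq⟩ := keystep (k+1) (by omega) F hdeg A hA hconv w hwA c₀ (hζ 0)
      refine ⟨z, hzA, ?_⟩
      have hupd : ∀ i : Fin (k+1),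
          eval (Function.update (fun _ => w) i c₀) f
            = eval (Fin.cons c₀ (fun _ => w)) f := by
        intro i
        conv_rhs => rw [← hsym (Equiv.swap 0 i)]
        rw [MvPolynomial.eval_rename, cons_eq_ite]
        have hfeq : ((fun j : Fin (k+1) => if j = 0 then c₀ else w) ∘ ⇑(Equiv.swap 0 i))
            = Function.update (fun _ => w) i c₀ := by
          funext j
          simp only [Function.comp_apply, Function.update_apply, Equiv.swap_apply_def]
          rcases eq_or_ne j 0 with rfl | hj0
          · rcases eq_or_ne (0 : Fin (k+1)) i with h0i | h0i
            · simp [← h0i]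
            · simp [h0i, Ne.symm h0i]
          · rcases eq_or_ne j i with rfl | hji
            · simp [hj0]
            · simp [hj0, hji]
        rw [hfeq]
      have hsum := sum_eval_update f hexp w c₀
      rw [← hF] at hsum
      rw [Finset.sum_congr rfl (fun i _ => hupd i)] at hsum
      rw [Finset.sum_const, Finset.card_univ, Fintype.card_fin, nsmul_eq_mul] at hsum
      -- hsum : (k+1 : ℂ) * eval (cons c₀ const_w) f = (k+1)*F.eval w + (c₀-w)*F'.eval w
      have hkC : ((k+1 : ℕ) : ℂ) ≠ 0 := Nat.cast_ne_zero.mpr (by omega)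
      have hfinal : ((k+1 : ℕ) : ℂ) * eval ζ f = ((k+1 : ℕ) : ℂ) * eval (fun _ => z) f := by
        rw [hw]
        push_cast at hsum hzeq ⊢
        rw [hsum, ← diagPoly_eval f z, ← hF, hzeq]
      have := mul_left_cancel₀ hkC hfinal
      exact this

end Main


/-- Grace-Walsh-Szegő for convex circular regions: a symmetric multiaffine polynomial
evaluated at points of a convex circular region A takes a value it also attains on the
diagonal of A. -/
theorem grace_walsh_szego_convex (n : ℕ) (hn : 1 ≤ n)
    (f : MvPolynomial (Fin n) ℂ) (hma : IsMultiaffine f)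
    (hsym : ∀ σ : Equiv.Perm (Fin n), rename ⇑σ f = f)
    (A : Set ℂ) (hA : IsCircularRegion A) (hconv : Convex ℝ A)
    (ζ : Fin n → ℂ) (hζ : ∀ i, ζ i ∈ A) :
    ∃ z ∈ A, eval ζ f = eval (fun _ => z) f := by
  exact gws_aux n hn f hma hsym A hA hconv ζ hζ
end

section
/- For every n ≥ 1, the polynomial ∑_{σ∈S_n} ∏_{j=1}^n (z_{σ(j)} + w_j) in the 2n variables z_1,…,z_n,w_1,…,w_n is stable; that is, it is nonvanishing whenever all of z_1,…,z_n,w_1,…,w_n lie in the open upper half-plane. -/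
section GWSHelpers
set_option maxHeartbeats 1000000
open Polynomial


noncomputable def qq (n : ℕ) (c : ℕ → ℂ) : Polynomial ℂ :=
  ∑ k ∈ Finset.range (n+1), C ((n.choose k : ℂ) * c k) * X ^ k

lemma qq_natDegree_le (n : ℕ) (c : ℕ → ℂ) : (qq n c).natDegree ≤ n := by
  refine (Polynomial.natDegree_sum_le _ _).trans ?_
  simp only [Finset.fold_max_le]
  refine ⟨by omega, ?_⟩
  intro k hk
  refine (natDegree_C_mul_le _ _).trans ?_
  simp only [natDegree_X_pow]
  exact Nat.lt_succ_iff.mp (Finset.mem_range.mp hk)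

lemma qq_coeff (n : ℕ) (c : ℕ → ℂ) (k : ℕ) :
    (qq n c).coeff k = (n.choose k : ℂ) * c k := by
  rw [qq, finset_sum_coeff]
  simp only [coeff_C_mul, coeff_X_pow, mul_ite, mul_one, mul_zero]
  rw [Finset.sum_ite_eq (Finset.range (n+1)) k]
  split_ifs with h
  · rfl
  · rw [Finset.mem_range, not_lt] at h
    rw [Nat.choose_eq_zero_of_lt (by omega)]
    simp

lemma idA (n k : ℕ) : (n+1) * Nat.choose n (k+1) + (k+1) * Nat.choose (n+1) (k+1)
    = (n+1) * Nat.choose (n+1) (k+1) := by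
  have h1 := Nat.choose_mul_succ_eq n (k+1)
  rcases le_or_gt (k+1) (n+1) with h | h
  · calc (n+1) * Nat.choose n (k+1) + (k+1) * Nat.choose (n+1) (k+1)
        = Nat.choose (n+1) (k+1) * ((n+1-(k+1)) + (k+1)) := by
          rw [mul_comm (n+1), h1]; ring
      _ = Nat.choose (n+1) (k+1) * (n+1) := by rw [Nat.sub_add_cancel h]
      _ = (n+1) * Nat.choose (n+1) (k+1) := mul_comm _ _
  · rw [Nat.choose_eq_zero_of_lt h, Nat.choose_eq_zero_of_lt (by omega)]
    simp

lemma idB (n k : ℕ) : (k+2) * Nat.choose (n+1) (k+2) = (n+1) * Nat.choose n (k+1) := by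
  have h := Nat.add_one_mul_choose_eq n (k+1)
  rw [mul_comm]
  exact h.symm

lemma qq_rec (n : ℕ) (c : ℕ → ℂ) (v : ℂ) :
    C ((n:ℂ)+1) * qq n (fun k => c k + v * c (k+1))
      = C ((n:ℂ)+1) * qq (n+1) c + (C v - X) * derivative (qq (n+1) c) := by
  ext k
  simp only [coeff_C_mul, coeff_add, sub_mul, coeff_sub]
  rw [qq_coeff]
  have hd : ∀ j, (derivative (qq (n+1) c)).coeff j
      = ((n+1).choose (j+1) : ℂ) * c (j+1) * ((j:ℂ)+1) := by
    intro j
    rw [coeff_derivative, qq_coeff]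
  match k with
  | 0 =>
    rw [qq_coeff, hd 0, Polynomial.mul_coeff_zero, coeff_X_zero, zero_mul]
    rw [show (0:ℕ)+1 = 1 from rfl]
    simp only [Nat.choose_zero_right, Nat.choose_one_right]
    push_cast
    ring
  | (k+1) =>
    rw [qq_coeff, hd (k+1), Polynomial.coeff_X_mul, hd k]
    have hA := congrArg (fun m : ℕ => (m : ℂ)) (idA n k)
    have hB := congrArg (fun m : ℕ => (m : ℂ)) (idB n k)
    push_cast at hA hB
    push_cast
    linear_combination c (k+1) * hA - v * c (k+2) * hB



lemma logderiv_prod_s10 (a : ℂ) (s : Multiset ℂ) (t : ℂ) (h : ∀ r ∈ s, t ≠ r) :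
    (derivative (C a * (s.map fun r => X - C r).prod)).eval t
      = (C a * (s.map fun r => X - C r).prod).eval t * (s.map fun r => (t - r)⁻¹).sum := by
  induction s using Multiset.induction with
  | empty => simp
  | cons r s ih =>
    have hr : t - r ≠ 0 := sub_ne_zero.mpr (h r (Multiset.mem_cons_self r s))
    have ih' := ih (fun x hx => h x (Multiset.mem_cons_of_mem hx))
    simp only [Multiset.map_cons, Multiset.prod_cons, Multiset.sum_cons] at *
    have e : C a * ((X - C r) * (s.map fun r => X - C r).prod)
        = (X - C r) * (C a * (s.map fun r => X - C r).prod) := by ring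
    rw [e, derivative_mul]
    simp only [eval_add, eval_mul, eval_sub, eval_X, eval_C, derivative_sub, derivative_X,
      derivative_C, sub_zero, eval_one, one_mul]
    rw [ih']
    field_simp
    simp only [eval_mul, eval_C]
    ring

lemma laguerre (n : ℕ) (hn : 1 ≤ n) (q : Polynomial ℂ) (hdeg : q.natDegree ≤ n)
    (hq : ∀ t : ℂ, 0 < t.im → q.eval t ≠ 0) (v : ℂ) (hv : 0 < v.im) :
    ∀ t : ℂ, 0 < t.im → (C (n : ℂ) * q + (C v - X) * derivative q).eval t ≠ 0 := by
  intro t ht hzero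
  have hqt : q.eval t ≠ 0 := hq t ht
  have hq0 : q ≠ 0 := fun h => hqt (by simp [h])
  have hfact := (C_leadingCoeff_mul_prod_multiset_X_sub_C (IsAlgClosed.card_roots_eq_natDegree (p := q))).symm
  have hroots : ∀ r ∈ q.roots, r.im ≤ 0 := by
    intro r hr
    by_contra hcon
    push_neg at hcon
    exact hq r hcon ((mem_roots hq0).mp hr)
  have htr : ∀ r ∈ q.roots, t ≠ r := by
    intro r hr he
    have := hroots r hr
    rw [← he] at this
    linarith
  set S : ℂ := (q.roots.map fun r => (t - r)⁻¹).sum with hSdef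
  have hS : (derivative q).eval t = q.eval t * S := by
    have h1 := logderiv_prod_s10 q.leadingCoeff q.roots t htr
    rw [← hfact] at h1
    exact h1
  -- the key algebraic relation
  simp only [eval_add, eval_mul, eval_sub, eval_X, eval_C, hS] at hzero
  have key : (n : ℂ) + (v - t) * S = 0 := by
    have h2 : q.eval t * ((n : ℂ) + (v - t) * S) = 0 := by linear_combination hzero
    rcases mul_eq_zero.mp h2 with h | h
    · exact absurd h hqt
    · exact h
  have hS0 : S ≠ 0 := by
    intro h
    rw [h, mul_zero, add_zero] at key
    have : (n:ℂ) ≠ 0 := Nat.cast_ne_zero.mpr (by omega)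
    exact this key
  -- geometric part
  set y : ℝ := t.im with hydef
  have hy : 0 < y := ht
  set B : ℝ := (2*y)⁻¹ with hBdef
  have hB : 0 < B := inv_pos.mpr (by linarith)
  have h2yB : 2*y*B = 1 := by rw [hBdef]; exact mul_inv_cancel₀ (by linarith)
  set m : ℕ := Multiset.card q.roots with hmdef
  have hm : m ≤ n := le_trans q.card_roots' hdeg
  have hball : ∀ r ∈ q.roots, ‖(t - r)⁻¹ + Complex.I * (B:ℂ)‖ ≤ B := by
    intro r hr
    set ξ : ℂ := t - r with hxidef
    have hξim : y ≤ ξ.im := by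
      have h1 := hroots r hr
      have h2 : ξ.im = t.im - r.im := by rw [hxidef, Complex.sub_im]
      rw [h2]
      linarith [hydef.le, hydef.ge]
    have hξ0 : ξ ≠ 0 := sub_ne_zero.mpr (htr r hr)
    have hξabs : 0 < ‖ξ‖ := norm_pos_iff.mpr hξ0
    have habs : ‖ξ⁻¹ + Complex.I * (B:ℂ)‖ * ‖ξ‖
        = ‖1 + Complex.I * (B:ℂ) * ξ‖ := by
      rw [← norm_mul]
      congr 1
      field_simp
    have hkey : ‖1 + Complex.I * (B:ℂ) * ξ‖ ≤ B * ‖ξ‖ := by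
      have hsq : (‖1 + Complex.I * (B:ℂ) * ξ‖)^2 ≤ (B * ‖ξ‖)^2 := by
        rw [mul_pow, Complex.sq_norm, Complex.sq_norm]
        simp only [Complex.normSq_apply, Complex.add_re, Complex.add_im, Complex.mul_re,
          Complex.mul_im, Complex.I_re, Complex.I_im, Complex.ofReal_re, Complex.ofReal_im,
          Complex.one_re, Complex.one_im]
        nlinarith [hξim, hy, hB, h2yB, sq_nonneg ξ.re, sq_nonneg ξ.im]
      exact le_of_pow_le_pow_left₀ two_ne_zero (by positivity) hsq
    exact le_of_mul_le_mul_right (habs.trans_le hkey) hξabs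
  have hsum : S + (m:ℂ) * (Complex.I * (B:ℂ))
      = (q.roots.map fun r => (t - r)⁻¹ + Complex.I * (B:ℂ)).sum := by
    rw [Multiset.sum_map_add]
    congr 1
    simp [Multiset.map_const', Multiset.sum_replicate, hmdef]
  have h1 : ‖S + (m:ℂ) * (Complex.I * (B:ℂ))‖ ≤ (m:ℝ) * B := by
    rw [hsum]
    refine (norm_multiset_sum_le _).trans ?_
    rw [Multiset.map_map]
    have : ∀ x ∈ q.roots.map ((fun z => ‖z‖) ∘ fun r => (t - r)⁻¹ + Complex.I * (B:ℂ)), x ≤ B := by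
      intro x hx
      obtain ⟨r, hr, rfl⟩ := Multiset.mem_map.mp hx
      simpa using hball r hr
    refine (Multiset.sum_le_card_nsmul _ _ this).trans ?_
    simp [hmdef, nsmul_eq_mul]
  have h2 : ‖S + (n:ℂ) * (Complex.I * (B:ℂ))‖ ≤ (n:ℝ) * B := by
    have e : S + (n:ℂ) * (Complex.I * (B:ℂ))
        = (S + (m:ℂ) * (Complex.I * (B:ℂ))) + ((n - m : ℕ):ℂ) * (Complex.I * (B:ℂ)) := by
      rw [Nat.cast_sub hm]
      ring
    rw [e]
    refine (norm_add_le _ _).trans ?_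
    have e2 : ‖((n - m : ℕ):ℂ) * (Complex.I * (B:ℂ))‖ = ((n - m : ℕ):ℝ) * B := by
      simp [norm_mul, Complex.norm_natCast, Complex.norm_I, Complex.norm_real, abs_of_pos hB]
    rw [e2, Nat.cast_sub hm]
    have hmr : (m:ℝ) ≤ (n:ℝ) := by exact_mod_cast hm
    nlinarith [h1]
  have hd : Complex.normSq (S + (n:ℂ) * (Complex.I * (B:ℂ))) ≤ ((n:ℝ) * B)^2 := by
    rw [← Complex.sq_norm]
    exact pow_le_pow_left₀ (norm_nonneg _) h2 2
  have hdisk : S.re^2 + S.im^2 + 2*(n:ℝ)*B*S.im ≤ 0 := by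
    simp only [Complex.normSq_apply, Complex.add_re, Complex.add_im, Complex.mul_re,
      Complex.mul_im, Complex.I_re, Complex.I_im, Complex.ofReal_re, Complex.ofReal_im,
      Complex.natCast_re, Complex.natCast_im] at hd
    nlinarith [hd]
  -- real/imaginary parts of the key equation
  have k1 := congrArg Complex.im key
  have k2 := congrArg Complex.re key
  simp only [Complex.add_im, Complex.add_re, Complex.mul_im, Complex.mul_re, Complex.sub_re,
    Complex.sub_im, Complex.natCast_im, Complex.natCast_re, Complex.zero_im, Complex.zero_re] at k1 k2
  have hvim : 0 < v.im := hv
  have hN2 : 0 ≤ Complex.normSq S := Complex.normSq_nonneg S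
  have hN2' : Complex.normSq S = S.re^2 + S.im^2 := by
    rw [Complex.normSq_apply]; ring
  -- derive (v.im - y) * (Sre² + Sim²) = n * S.im
  have hmain : (v.im - y) * (S.re^2 + S.im^2) = (n:ℝ) * S.im := by
    linear_combination S.re * k1 - S.im * k2
  have hSne : 0 < S.re^2 + S.im^2 := by
    have := Complex.normSq_pos.mpr hS0
    rw [hN2'] at this
    exact this
  have e0 : 2*y*B*((n:ℝ)*S.im) = (n:ℝ)*S.im := by rw [h2yB]; ring
  have e1 : y*(S.re^2 + S.im^2) + (n:ℝ)*S.im ≤ 0 := by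
    nlinarith [mul_le_mul_of_nonneg_left hdisk hy.le, e0]
  nlinarith [e1, hmain, mul_pos hvim hSne]



lemma qq_eval_diag {ι : Type*} [DecidableEq ι] (s : Finset ι) (c : ℕ → ℂ) (t : ℂ) :
    (qq s.card c).eval t = ∑ S ∈ s.powerset, c S.card * t ^ S.card := by
  rw [qq, eval_finset_sum, Finset.sum_powerset]
  refine Finset.sum_congr rfl ?_
  intro k hk
  have hconst : ∀ S ∈ Finset.powersetCard k s, c S.card * t ^ S.card = c k * t ^ k := by
    intro S hS
    rw [(Finset.mem_powersetCard.mp hS).2]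
  rw [Finset.sum_congr rfl hconst, Finset.sum_const, Finset.card_powersetCard]
  simp only [eval_mul, eval_C, eval_pow, eval_X, nsmul_eq_mul]
  push_cast
  ring

lemma lemB {ι : Type*} [DecidableEq ι] (s : Finset ι) (c : ℕ → ℂ)
    (hq : ∀ t : ℂ, 0 < t.im → (qq s.card c).eval t ≠ 0)
    (z : ι → ℂ) (hz : ∀ i ∈ s, 0 < (z i).im) :
    (∑ S ∈ s.powerset, c S.card * ∏ i ∈ S, z i) ≠ 0 := by
  induction s using Finset.induction generalizing c with
  | empty =>
    simp only [Finset.powerset_empty, Finset.sum_singleton, Finset.card_empty,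
      Finset.prod_empty, mul_one]
    intro h
    apply hq Complex.I (by simp)
    simp [qq, h]
  | @insert a s ha ih =>
    have hcard : (insert a s).card = s.card + 1 := Finset.card_insert_of_notMem ha
    rw [Finset.sum_powerset_insert ha]
    have hsum : ∀ S ∈ s.powerset,
        c (insert a S).card * ∏ i ∈ insert a S, z i
          = (z a * c (S.card + 1)) * ∏ i ∈ S, z i := by
      intro S hS
      have haS : a ∉ S := fun h => ha (Finset.mem_powerset.mp hS h)
      rw [Finset.card_insert_of_notMem haS, Finset.prod_insert haS]
      ring
    rw [Finset.sum_congr rfl hsum, ← Finset.sum_add_distrib]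
    have e : ∀ S : Finset ι, c S.card * ∏ i ∈ S, z i + (z a * c (S.card + 1)) * ∏ i ∈ S, z i
        = (c S.card + z a * c (S.card + 1)) * ∏ i ∈ S, z i := fun S => by ring
    rw [Finset.sum_congr rfl (fun S _ => e S)]
    -- apply IH with modified coefficients
    apply ih (fun k => c k + z a * c (k+1)) ?_ (fun i hi => hz i (Finset.mem_insert_of_mem hi))
    -- stability of the new q via Laguerre
    intro t ht
    have hlag := laguerre (s.card + 1) (by omega) (qq (s.card + 1) c) (qq_natDegree_le _ _)
      (by rw [← hcard]; exact hq) (z a) (hz a (Finset.mem_insert_self a s)) t ht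
    have hrec := qq_rec s.card c (z a)
    have hcast : ((s.card + 1 : ℕ) : ℂ) = (s.card : ℂ) + 1 := by push_cast; ring
    rw [hcast] at hlag
    rw [← hrec] at hlag
    simp only [eval_mul, eval_C] at hlag
    intro h0
    rw [h0, mul_zero] at hlag
    exact hlag rfl

open scoped Classical in
noncomputable def dd (n : ℕ) (w : Fin n → ℂ) (Sset : Finset (Fin n)) : ℂ :=
  ∑ p ∈ Finset.univ.filter
      (fun p : Equiv.Perm (Fin n) × Finset (Fin n) => p.2.image ⇑p.1 = Sset),
    ∏ j ∈ p.2ᶜ, w j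

open scoped Classical in
lemma expand_perm_sum (n : ℕ) (w : Fin n → ℂ) (z : Fin n → ℂ) :
    ∑ σ : Equiv.Perm (Fin n), ∏ j, (z (σ j) + w j)
      = ∑ S : Finset (Fin n), dd n w S * ∏ i ∈ S, z i := by
  have h1 : ∀ σ : Equiv.Perm (Fin n), (∏ j, (z (σ j) + w j))
      = ∑ T : Finset (Fin n), (∏ i ∈ T.image ⇑σ, z i) * ∏ j ∈ Tᶜ, w j := by
    intro σ
    rw [Finset.prod_add, ← Finset.powerset_univ]
    refine Finset.sum_congr rfl ?_
    intro T hT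
    rw [Finset.prod_image (fun a _ b _ hab => σ.injective hab), ← Finset.compl_eq_univ_sdiff]
  rw [Finset.sum_congr rfl (fun σ _ => h1 σ), ← Finset.sum_product', Finset.univ_product_univ]
  rw [← Finset.sum_fiberwise Finset.univ
    (fun p : Equiv.Perm (Fin n) × Finset (Fin n) => p.2.image ⇑p.1)
    (fun p => (∏ i ∈ p.2.image ⇑p.1, z i) * ∏ j ∈ p.2ᶜ, w j)]
  refine Finset.sum_congr rfl ?_
  intro S _
  rw [dd, Finset.sum_mul]
  refine Finset.sum_congr rfl ?_
  intro p hp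
  rw [(Finset.mem_filter.mp hp).2, mul_comm]

lemma exists_perm_image {n : ℕ} (S S' : Finset (Fin n)) (h : S.card = S'.card) :
    ∃ π : Equiv.Perm (Fin n), S.image ⇑π = S' := by
  classical
  have h2 : Sᶜ.card = S'ᶜ.card := by
    rw [Finset.card_compl, Finset.card_compl, h]
  let e : {x // x ∈ S} ≃ {x // x ∈ S'} := Finset.equivOfCardEq h
  let e' : {x // x ∈ Sᶜ} ≃ {x // x ∈ S'ᶜ} := Finset.equivOfCardEq h2
  let e'' : {x // ¬ x ∈ S} ≃ {x // ¬ x ∈ S'} :=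
    ((Equiv.subtypeEquivRight (fun x => (Finset.mem_compl (s := S)))).symm.trans e').trans
      (Equiv.subtypeEquivRight (fun x => (Finset.mem_compl (s := S'))))
  let π : Equiv.Perm (Fin n) :=
    ((Equiv.sumCompl (· ∈ S)).symm.trans (e.sumCongr e'')).trans (Equiv.sumCompl (· ∈ S'))
  refine ⟨π, Finset.eq_of_subset_of_card_le ?_ ?_⟩
  · intro y hy
    obtain ⟨a, ha, rfl⟩ := Finset.mem_image.mp hy
    have : π a = ↑(e ⟨a, ha⟩) := by
      simp only [π, Equiv.trans_apply, Equiv.sumCompl_symm_apply_of_pos ha,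
        Equiv.sumCongr_apply, Sum.map_inl, Equiv.sumCompl_apply_inl]
    rw [this]
    exact Finset.coe_mem _
  · rw [Finset.card_image_of_injective _ π.injective, h]

open scoped Classical in
lemma dd_card_invariant (n : ℕ) (w : Fin n → ℂ) (S S' : Finset (Fin n))
    (h : S.card = S'.card) : dd n w S = dd n w S' := by
  obtain ⟨π, hπ⟩ := exists_perm_image S S' h
  rw [dd, dd]
  refine Finset.sum_bij' (i := fun p _ => (p.1.trans π, p.2)) (j := fun p _ => (p.1.trans π.symm, p.2))
    ?_ ?_ ?_ ?_ ?_
  · intro p hp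
    rw [Finset.mem_filter] at hp ⊢
    refine ⟨Finset.mem_univ _, ?_⟩
    have : p.2.image ⇑(p.1.trans π) = (p.2.image ⇑p.1).image ⇑π := by
      rw [Finset.image_image]; rfl
    rw [this, hp.2, hπ]
  · intro p hp
    rw [Finset.mem_filter] at hp ⊢
    refine ⟨Finset.mem_univ _, ?_⟩
    have : p.2.image ⇑(p.1.trans π.symm) = (p.2.image ⇑p.1).image ⇑π.symm := by
      rw [Finset.image_image]; rfl
    rw [this, hp.2, ← hπ, Finset.image_image]
    simp
  · intro p hp
    ext j
    · simp [Equiv.trans_assoc]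
    · rfl
  · intro p hp
    ext j
    · simp [Equiv.trans_assoc]
    · rfl
  · intro p hp
    rfl

open MvPolynomial in
open scoped Classical in
theorem gws_polynomial_stable' (n : ℕ) (hn : 1 ≤ n) :
    ∀ x : (Fin n ⊕ Fin n) → ℂ, (∀ i, 0 < (x i).im) →
      MvPolynomial.eval x (∑ σ : Equiv.Perm (Fin n), ∏ j : Fin n,
        (X (Sum.inl (σ j)) + X (Sum.inr j) : MvPolynomial (Fin n ⊕ Fin n) ℂ)) ≠ 0 := by
  intro x hx
  set z : Fin n → ℂ := fun i => x (Sum.inl i) with hz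
  set w : Fin n → ℂ := fun j => x (Sum.inr j) with hw
  have heval : MvPolynomial.eval x (∑ σ : Equiv.Perm (Fin n), ∏ j : Fin n,
        (X (Sum.inl (σ j)) + X (Sum.inr j) : MvPolynomial (Fin n ⊕ Fin n) ℂ))
      = ∑ σ : Equiv.Perm (Fin n), ∏ j, (z (σ j) + w j) := by
    rw [map_sum]
    refine Finset.sum_congr rfl ?_
    intro σ _
    rw [map_prod]
    refine Finset.prod_congr rfl ?_
    intro j _
    simp [hz, hw]
  rw [heval]
  -- the coefficient function
  set c : ℕ → ℂ := fun k =>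
    if h : ∃ S : Finset (Fin n), S.card = k then dd n w h.choose else 0 with hc
  have hdc : ∀ S : Finset (Fin n), dd n w S = c S.card := by
    intro S
    have hex : ∃ S' : Finset (Fin n), S'.card = S.card := ⟨S, rfl⟩
    rw [hc]
    simp only [dif_pos hex]
    exact dd_card_invariant n w S hex.choose hex.choose_spec.symm
  have hffeq : ∀ ζ : Fin n → ℂ, (∑ S ∈ (Finset.univ : Finset (Fin n)).powerset,
        c S.card * ∏ i ∈ S, ζ i) = ∑ σ : Equiv.Perm (Fin n), ∏ j, (ζ (σ j) + w j) := by
    intro ζ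
    rw [expand_perm_sum n w ζ, Finset.powerset_univ]
    refine Finset.sum_congr rfl ?_
    intro S _
    rw [hdc S]
  -- stability of the diagonal polynomial
  have hq : ∀ t : ℂ, 0 < t.im → (qq (Finset.univ : Finset (Fin n)).card c).eval t ≠ 0 := by
    intro t ht
    rw [qq_eval_diag]
    have hpr : ∀ S ∈ (Finset.univ : Finset (Fin n)).powerset,
        c S.card * t ^ S.card = c S.card * ∏ _i ∈ S, t := by
      intro S _
      rw [Finset.prod_const]
    rw [Finset.sum_congr rfl hpr, hffeq (fun _ => t)]
    have hterm : ∀ σ : Equiv.Perm (Fin n), (∏ j, ((fun _ => t) (σ j) + w j)) = ∏ j, (t + w j) :=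
      fun σ => rfl
    rw [Finset.sum_congr rfl (fun σ _ => hterm σ), Finset.sum_const]
    apply smul_ne_zero
    · simp
    · rw [Finset.prod_ne_zero_iff]
      intro j _
      intro h0
      have : 0 < (t + w j).im := by
        rw [Complex.add_im]
        have := hx (Sum.inr j)
        exact add_pos ht this
      rw [h0] at this
      simp at this
  have := lemB (Finset.univ : Finset (Fin n)) c hq z (fun i _ => hx (Sum.inl i))
  rw [hffeq z] at this
  exact this


end GWSHelpers


open MvPolynomial
open scoped Classical

set_option maxHeartbeats 1000000 in
/-- The Grace-Walsh-Szegő polynomial `∑_{σ ∈ S_n} ∏_j (z_{σ(j)} + w_j)` is stable. -/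
theorem gws_polynomial_stable (n : ℕ) (hn : 1 ≤ n) :
    IsStable (∑ σ : Equiv.Perm (Fin n), ∏ j : Fin n,
      (X (Sum.inl (σ j)) + X (Sum.inr j) : MvPolynomial (Fin n ⊕ Fin n) ℂ)) := by
  intro x hx
  exact gws_polynomial_stable' n hn x hx
end
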